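/- arXiv:2601.17537 — 2 statements merged into one kernel-verified Lean document; each statement's English description precedes it below -/
import Mathlib

section
/- Let 𝒜 be a reduced gST-automaton and let X(𝒜) be the structure with cells (Q ⊔ E)/∼, where e ∼ s(e) if λ(e) is a terminator and e ∼ t(e) if λ(e) is a starter, with ev([q]) = μ(q) and ev([e]) = U for λ(e) = ⟨S,U,T⟩, and whose only defined face maps are δ⁰_{U∖S}([e]) = [s(e)] and δ¹_{U∖T}([e]) = [t(e)] for each transition e with λ(e) = ⟨S,U,T⟩, together with the initial and accepting cells inherited from 𝒜. Then X(𝒜) satisfies the lax precubical identity, i.e. X(𝒜) is a partial HDA; in fact no two of its nontrivial face maps are composable. -/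
open scoped Classical

namespace HDA

/-! ### Ipomsets over a fixed alphabet -/

structure PreIpomset (σ : Type) : Type 1 where
  carrier : Type
  fin : Finite carrier
  lt : carrier → carrier → Prop
  evord : carrier → carrier → Prop
  S : Set carrier
  T : Set carrier
  lab : carrier → σ

namespace PreIpomset

variable {σ : Type}

/-- The precedence order is empty. -/
def Discrete (P : PreIpomset σ) : Prop := ∀ x y, ¬ P.lt x y

/-- Validity: `lt` is a strict partial order which is an interval order, `evord` is acyclic,
for distinct events exactly one of the four relations holds, sources are minimal and
targets are maximal.  (All ipomsets considered are interval.) -/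
structure IsIpomset (P : PreIpomset σ) : Prop where
  lt_trans : ∀ x y z, P.lt x y → P.lt y z → P.lt x z
  lt_irrefl : ∀ x, ¬ P.lt x x
  evord_acyclic : ∀ x, ¬ Relation.TransGen P.evord x x
  total : ∀ x y : P.carrier, x ≠ y → P.lt x y ∨ P.lt y x ∨ P.evord x y ∨ P.evord y x
  lt_not_evord : ∀ x y, P.lt x y → ¬ P.evord x y ∧ ¬ P.evord y x
  src_min : ∀ x ∈ P.S, ∀ y, ¬ P.lt y x
  tgt_max : ∀ x ∈ P.T, ∀ y, ¬ P.lt x y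
  interval : ∀ w x y z, P.lt w x → P.lt y z → P.lt w z ∨ P.lt y x

/-- A conclist: a discrete ipomset with empty interfaces. -/
def IsConclist (P : PreIpomset σ) : Prop :=
  P.IsIpomset ∧ P.Discrete ∧ P.S = ∅ ∧ P.T = ∅

/-- A starter `⟨U∖A,U,U⟩`. -/
def IsStarter (P : PreIpomset σ) : Prop := P.IsIpomset ∧ P.Discrete ∧ P.T = Set.univ

/-- A terminator `⟨U,U,U∖B⟩`. -/
def IsTerminator (P : PreIpomset σ) : Prop := P.IsIpomset ∧ P.Discrete ∧ P.S = Set.univ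

/-- An identity `⟨U,U,U⟩`. -/
def IsIdentityIpomset (P : PreIpomset σ) : Prop :=
  P.IsIpomset ∧ P.Discrete ∧ P.S = Set.univ ∧ P.T = Set.univ

def IsProperStarter (P : PreIpomset σ) : Prop := P.IsStarter ∧ P.S ≠ Set.univ

def IsProperTerminator (P : PreIpomset σ) : Prop := P.IsTerminator ∧ P.T ≠ Set.univ

/-- Isomorphism of (pre)ipomsets. -/
def Iso (P Q : PreIpomset σ) : Prop :=
  ∃ f : P.carrier ≃ Q.carrier,
    (∀ x y, P.lt x y ↔ Q.lt (f x) (f y)) ∧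
    (∀ x y, P.evord x y ↔ Q.evord (f x) (f y)) ∧
    (∀ x, x ∈ P.S ↔ f x ∈ Q.S) ∧
    (∀ x, x ∈ P.T ↔ f x ∈ Q.T) ∧
    (∀ x, Q.lab (f x) = P.lab x)

/-- Restriction to a subset of events, with empty interfaces. -/
def restrict (P : PreIpomset σ) (K : Set P.carrier) : PreIpomset σ where
  carrier := {x : P.carrier // x ∈ K}
  fin := by haveI := P.fin; exact inferInstance
  lt := fun x y => P.lt x.val y.val
  evord := fun x y => P.evord x.val y.val
  S := ∅
  T := ∅
  lab := fun x => P.lab x.val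

/-- The source interface of `P` as a conclist. -/
def srcIface (P : PreIpomset σ) : PreIpomset σ := P.restrict P.S

/-- The target interface of `P` as a conclist. -/
def tgtIface (P : PreIpomset σ) : PreIpomset σ := P.restrict P.T

/-- The underlying conclist (forget interfaces). -/
def conclistOf (P : PreIpomset σ) : PreIpomset σ := { P with S := ∅, T := ∅ }

/-- The identity ipomset `⟨U,U,U⟩` on the conclist underlying `P`. -/
def idOf (P : PreIpomset σ) : PreIpomset σ := { P with S := Set.univ, T := Set.univ }

/-- The discrete ipomset `⟨S,U,T⟩` on the conclist underlying `P`. -/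
def withIfaces (P : PreIpomset σ) (S T : Set P.carrier) : PreIpomset σ :=
  { P with S := S, T := T }

/-- The starter `⟨U∖A,U,U⟩` on the conclist underlying `P`. -/
def starter (P : PreIpomset σ) (A : Set P.carrier) : PreIpomset σ :=
  { P with S := Aᶜ, T := Set.univ }

/-- The terminator `⟨U,U,U∖B⟩` on the conclist underlying `P`. -/
def terminator (P : PreIpomset σ) (B : Set P.carrier) : PreIpomset σ :=
  { P with S := Set.univ, T := Bᶜ }

/-- A matching `T_P ≅ S_Q`, i.e. an isomorphism of interface conclists
along which `P` and `Q` may be glued. -/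
structure Matching (P Q : PreIpomset σ) : Type where
  g : {x : P.carrier // x ∈ P.T} ≃ {y : Q.carrier // y ∈ Q.S}
  evord_iff : ∀ x y, P.evord x.val y.val ↔ Q.evord (g x).val (g y).val
  lab_eq : ∀ x, Q.lab (g x).val = P.lab x.val

def gluePOf (P Q : PreIpomset σ) :
    P.carrier ⊕ {y : Q.carrier // y ∉ Q.S} → Option P.carrier
  | Sum.inl x => some x
  | Sum.inr _ => none

noncomputable def glueQOf (P Q : PreIpomset σ) (m : Matching P Q) :
    P.carrier ⊕ {y : Q.carrier // y ∉ Q.S} → Option Q.carrier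
  | Sum.inl x => if h : x ∈ P.T then some (m.g ⟨x, h⟩).val else none
  | Sum.inr y => some y.val

/-- The gluing `P * Q` along a matching `T_P ≅ S_Q`. -/
noncomputable def glue (P Q : PreIpomset σ) (m : Matching P Q) : PreIpomset σ where
  carrier := P.carrier ⊕ {y : Q.carrier // y ∉ Q.S}
  fin := by haveI := P.fin; haveI := Q.fin; exact inferInstance
  lt := fun u v =>
    (∃ x x', gluePOf P Q u = some x ∧ gluePOf P Q v = some x' ∧ P.lt x x') ∨
    (∃ y y', glueQOf P Q m u = some y ∧ glueQOf P Q m v = some y' ∧ Q.lt y y') ∨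
    ((∃ x, gluePOf P Q u = some x ∧ x ∉ P.T) ∧
     (∃ y, glueQOf P Q m v = some y ∧ y ∉ Q.S))
  evord := fun u v =>
    (∃ x x', gluePOf P Q u = some x ∧ gluePOf P Q v = some x' ∧ P.evord x x') ∨
    (∃ y y', glueQOf P Q m u = some y ∧ glueQOf P Q m v = some y' ∧ Q.evord y y')
  S := {u | ∃ x, gluePOf P Q u = some x ∧ x ∈ P.S}
  T := {u | ∃ y, glueQOf P Q m u = some y ∧ y ∈ Q.T}
  lab := Sum.elim P.lab fun y => Q.lab y.val

/-- `R` is (isomorphic to) the gluing `P * Q`; in particular `T_P ≅ S_Q`. -/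
def GlueRel (P Q R : PreIpomset σ) : Prop :=
  ∃ m : Matching P Q, Iso (glue P Q m) R

/-- A choice of gluing (used when a matching is known to exist). -/
noncomputable def glueChoice (P Q : PreIpomset σ) : PreIpomset σ :=
  if h : Nonempty (Matching P Q) then glue P Q h.some else P

/-- `GluesTo l R`: `R` is the gluing of the nonempty list `l` of ipomsets. -/
inductive GluesTo : List (PreIpomset σ) → PreIpomset σ → Prop
  | single {P R : PreIpomset σ} : Iso P R → GluesTo [P] R
  | cons {P : PreIpomset σ} {l : List (PreIpomset σ)} {R' R : PreIpomset σ} :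
      GluesTo l R' → GlueRel P R' R → GluesTo (P :: l) R

/-- Proper starters and proper terminators alternate. -/
def Alternating (l : List (PreIpomset σ)) : Prop :=
  l.Chain' fun P Q => (IsProperStarter P ∧ IsProperTerminator Q) ∨
    (IsProperTerminator P ∧ IsProperStarter Q)

/-- `l` is a sparse step decomposition of `R`: either a single identity, or an
alternating sequence of proper starters and proper terminators gluing to `R`. -/
def IsSparseDecomp (l : List (PreIpomset σ)) (R : PreIpomset σ) : Prop :=
  GluesTo l R ∧
  ((∃ I, l = [I] ∧ IsIdentityIpomset I) ∨
   ((∀ P ∈ l, IsProperStarter P ∨ IsProperTerminator P) ∧ Alternating l))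

/-- `P ∈ iPoms^q`: the sparse step decomposition of `P` does not end with a
proper starter (i.e. it ends with a terminator or is a single identity). -/
def InQ (P : PreIpomset σ) : Prop :=
  ∃ l, IsSparseDecomp l P ∧ ∀ Q, l.getLast? = some Q → ¬ IsProperStarter Q

end PreIpomset

open PreIpomset

variable {σ : Type}

/-! ### Languages and rational operations -/

def glueLang (L M : Set (PreIpomset σ)) : Set (PreIpomset σ) :=
  {R | ∃ P ∈ L, ∃ Q ∈ M, GlueRel P Q R}

def powLang (L : Set (PreIpomset σ)) : ℕ → Set (PreIpomset σ)
  | 0 => L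
  | n + 1 => glueLang L (powLang L n)

/-- `L⁺ = ⋃_{n ≥ 1} Lⁿ`. -/
def plusLang (L : Set (PreIpomset σ)) : Set (PreIpomset σ) := ⋃ n, powLang L n

/-- Rational languages of (interval) ipomsets: generated from `∅` and singletons
(up to isomorphism) of starters and terminators by union, gluing composition and plus. -/
inductive Rational : Set (PreIpomset σ) → Prop
  | empty : Rational ∅
  | single {P : PreIpomset σ} : IsStarter P ∨ IsTerminator P → Rational {Q | Iso Q P}
  | union {L M : Set (PreIpomset σ)} : Rational L → Rational M → Rational (L ∪ M)
  | concat {L M : Set (PreIpomset σ)} : Rational L → Rational M → Rational (glueLang L M)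
  | plus {L : Set (PreIpomset σ)} : Rational L → Rational (plusLang L)

/-! ### P-automata -/

structure PAutomaton (σ : Type) : Type 1 where
  Q : Type
  E : Type
  src : E → Q
  tgt : E → Q
  lab : E → PreIpomset σ
  mu : Q → PreIpomset σ
  start : Set Q
  accept : Set Q

namespace PAutomaton

variable {σ : Type}

/-- The axioms of a P-automaton: finite sets of states and transitions, states
labelled by conclists, transitions by interval ipomsets, with
`μ(s(e)) ≅ S_{λ(e)}` and `μ(t(e)) ≅ T_{λ(e)}`. -/
def IsPA (A : PAutomaton σ) : Prop :=
  Finite A.Q ∧ Finite A.E ∧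
  (∀ q, (A.mu q).IsConclist) ∧ (∀ e, (A.lab e).IsIpomset) ∧
  (∀ e, Iso (A.lab e).srcIface (A.mu (A.src e))) ∧
  (∀ e, Iso (A.lab e).tgtIface (A.mu (A.tgt e)))

/-- ST-automaton: every label is a starter or a terminator. -/
def IsST (A : PAutomaton σ) : Prop := ∀ e, IsStarter (A.lab e) ∨ IsTerminator (A.lab e)

/-- gST-automaton: every label is discrete. -/
def IsGST (A : PAutomaton σ) : Prop := ∀ e, (A.lab e).Discrete

/-- No transition is labelled by an identity. -/
def NoSilent (A : PAutomaton σ) : Prop := ∀ e, ¬ IsIdentityIpomset (A.lab e)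

/-- A reduced gST-automaton: no silent transitions and conditions (a)–(f). -/
def Reduced (A : PAutomaton σ) : Prop :=
  NoSilent A ∧
  (∀ e, A.tgt e ∉ A.start) ∧
  (∀ e, A.src e ∉ A.accept) ∧
  (∀ e, (A.lab e).T = Set.univ → A.tgt e ∈ A.accept) ∧
  (∀ e, (A.lab e).S = Set.univ → A.src e ∈ A.start) ∧
  (∀ e e', A.src e ∈ A.start → A.src e' = A.src e → e' = e) ∧
  (∀ e e', A.tgt e ∈ A.accept → A.tgt e' = A.tgt e → e' = e)

/-- Paths in a P-automaton, from a state to a state. -/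
inductive Path (A : PAutomaton σ) : A.Q → A.Q → Type
  | nil (q : A.Q) : Path A q q
  | cons (e : A.E) {r : A.Q} (rest : Path A (A.tgt e) r) : Path A (A.src e) r

/-- The (interval) ipomset recognized by a path, up to isomorphism:
the gluing of the labels of its transitions (an identity for a constant path). -/
inductive Rec {A : PAutomaton σ} : ∀ {p r : A.Q}, Path A p r → PreIpomset σ → Prop
  | nil (q : A.Q) (R : PreIpomset σ) : Iso (A.mu q).idOf R → Rec (Path.nil q) R
  | cons (e : A.E) {r : A.Q} (rest : Path A (A.tgt e) r) {R' R : PreIpomset σ} :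
      Rec rest R' → GlueRel (A.lab e) R' R → Rec (Path.cons e rest) R

/-- The language of a P-automaton. -/
def lang (A : PAutomaton σ) : Set (PreIpomset σ) :=
  {R | ∃ p r, ∃ α : Path A p r, p ∈ A.start ∧ r ∈ A.accept ∧ Rec α R}

/-- Dimension of a transition. -/
noncomputable def dim (A : PAutomaton σ) (e : A.E) : ℕ := Nat.card (A.lab e).carrier

/-- Number of bad starter transitions of dimension `n`. -/
noncomputable def bst (A : PAutomaton σ) (n : ℕ) : ℕ :=
  Nat.card {e : A.E // IsProperStarter (A.lab e) ∧ A.tgt e ∉ A.accept ∧ A.dim e = n}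

/-- Number of bad terminator transitions of dimension `n`. -/
noncomputable def btt (A : PAutomaton σ) (n : ℕ) : ℕ :=
  Nat.card {e : A.E // IsProperTerminator (A.lab e) ∧ A.src e ∉ A.start ∧ A.dim e = n}

/-- The automaton `𝒜_c`: remove the starter transition `c`; for every transition `e`
out of `t(c)` add a transition `e*` from `s(c)` to `t(e)` labelled `λ(c) * λ(e)`. -/
noncomputable def Ac (A : PAutomaton σ) (c : A.E) : PAutomaton σ where
  Q := A.Q
  E := {e : A.E // e ≠ c} ⊕ {e : A.E // A.src e = A.tgt c}
  src := Sum.elim (fun e => A.src e.val) fun _ => A.src c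
  tgt := Sum.elim (fun e => A.tgt e.val) fun e => A.tgt e.val
  lab := Sum.elim (fun e => A.lab e.val) fun e => glueChoice (A.lab c) (A.lab e.val)
  mu := A.mu
  start := A.start
  accept := A.accept

/-- Disjoint union of two P-automata. -/
def sumAut (A B : PAutomaton σ) : PAutomaton σ where
  Q := A.Q ⊕ B.Q
  E := A.E ⊕ B.E
  src := Sum.elim (Sum.inl ∘ A.src) (Sum.inr ∘ B.src)
  tgt := Sum.elim (Sum.inl ∘ A.tgt) (Sum.inr ∘ B.tgt)
  lab := Sum.elim A.lab B.lab
  mu := Sum.elim A.mu B.mu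
  start := Sum.inl '' A.start ∪ Sum.inr '' B.start
  accept := Sum.inl '' A.accept ∪ Sum.inr '' B.accept

/-- Concatenation `𝒜 * ℬ`: disjoint union together with identity-labelled transitions
from accepting states of `𝒜` to initial states of `ℬ` with isomorphic state labels. -/
def concatAut (A B : PAutomaton σ) : PAutomaton σ where
  Q := A.Q ⊕ B.Q
  E := A.E ⊕ B.E ⊕
    {pq : A.Q × B.Q // pq.1 ∈ A.accept ∧ pq.2 ∈ B.start ∧ Iso (A.mu pq.1) (B.mu pq.2)}
  src := Sum.elim (Sum.inl ∘ A.src)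
    (Sum.elim (Sum.inr ∘ B.src) fun pq => Sum.inl pq.val.1)
  tgt := Sum.elim (Sum.inl ∘ A.tgt)
    (Sum.elim (Sum.inr ∘ B.tgt) fun pq => Sum.inr pq.val.2)
  lab := Sum.elim A.lab (Sum.elim B.lab fun pq => (A.mu pq.val.1).idOf)
  mu := Sum.elim A.mu B.mu
  start := Sum.inl '' A.start
  accept := Sum.inr '' B.accept

/-- Kleene plus `𝒜⁺`: add identity-labelled transitions from accepting states
to initial states with isomorphic state labels. -/
def plusAut (A : PAutomaton σ) : PAutomaton σ where
  Q := A.Q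
  E := A.E ⊕
    {pq : A.Q × A.Q // pq.1 ∈ A.accept ∧ pq.2 ∈ A.start ∧ Iso (A.mu pq.1) (A.mu pq.2)}
  src := Sum.elim A.src fun pq => pq.val.1
  tgt := Sum.elim A.tgt fun pq => pq.val.2
  lab := Sum.elim A.lab fun pq => (A.mu pq.val.1).idOf
  mu := A.mu
  start := A.start
  accept := A.accept

end PAutomaton

/-! ### Partial HDAs -/

/-- `g` exhibits `V` as the sub-conclist of `U` obtained by removing the events in `K`. -/
def IsFaceEmbed (U : PreIpomset σ) (K : Set U.carrier) (V : PreIpomset σ)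
    (g : V.carrier → U.carrier) : Prop :=
  Function.Injective g ∧ Set.range g = Kᶜ ∧
  (∀ u v, V.evord u v ↔ U.evord (g u) (g v)) ∧
  (∀ u, U.lab (g u) = V.lab u)

/-- The data of a partial higher-dimensional automaton: cells labelled by conclists,
partial face maps, initial and accepting cells. -/
structure PrePHDA (σ : Type) : Type 1 where
  cell : Type
  ev : cell → PreIpomset σ
  face : (x : cell) → Set (ev x).carrier → Set (ev x).carrier → Option cell
  start : Set cell
  accept : Set cell

namespace PrePHDA

variable {σ : Type}

/-- The lax precubical identity: whenever `δ_{A,B}(x)` and `δ_{C,D}(δ_{A,B}(x))` are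
defined, `δ_{A∪C,B∪D}(x)` is defined and equal to the composite. -/
def IsLax (X : PrePHDA σ) : Prop :=
  ∀ x (A B : Set (X.ev x).carrier) y, X.face x A B = some y →
    ∀ g, IsFaceEmbed (X.ev x) (A ∪ B) (X.ev y) g →
      ∀ (C D : Set (X.ev y).carrier) z, X.face y C D = some z →
        X.face x (A ∪ g '' C) (B ∪ g '' D) = some z

/-- The axioms of a partial HDA. -/
def IsPHDA (X : PrePHDA σ) : Prop :=
  (∀ x, (X.ev x).IsConclist) ∧
  (∀ x, X.face x ∅ ∅ = some x) ∧
  (∀ x A B y, X.face x A B = some y →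
    Disjoint A B ∧ ∃ g, IsFaceEmbed (X.ev x) (A ∪ B) (X.ev y) g) ∧
  IsLax X

/-- Strictness: `δ_{C,D} ∘ δ_{A,B} = δ_{A∪C,B∪D}` as partial functions. -/
def IsStrict (X : PrePHDA σ) : Prop :=
  IsPHDA X ∧
  (∀ x (A B : Set (X.ev x).carrier) y, X.face x A B = some y →
    ∀ g, IsFaceEmbed (X.ev x) (A ∪ B) (X.ev y) g →
      ∀ C D : Set (X.ev y).carrier,
        X.face x (A ∪ g '' C) (B ∪ g '' D) = X.face y C D) ∧
  (∀ x (A B C D : Set (X.ev x).carrier),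
    Disjoint (A ∪ C) (B ∪ D) → C ∪ D ⊆ (A ∪ B)ᶜ →
    X.face x A B = none → X.face x (A ∪ C) (B ∪ D) = none)

/-- Paths in a partial HDA: sequences of upsteps and downsteps. -/
inductive Path (X : PrePHDA σ) : X.cell → X.cell → Type
  | nil (x : X.cell) : Path X x x
  | up {x z : X.cell} (y : X.cell) (A : Set (X.ev y).carrier)
      (h : X.face y A ∅ = some x) (rest : Path X y z) : Path X x z
  | down {z w : X.cell} (y : X.cell) (B : Set (X.ev y).carrier)
      (h : X.face y ∅ B = some z) (rest : Path X z w) : Path X y w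

/-- Directions of the steps of a path (`true` = upstep). -/
def Path.dirs {X : PrePHDA σ} : {x z : X.cell} → Path X x z → List Bool
  | _, _, .nil _ => []
  | _, _, .up _ _ _ rest => true :: rest.dirs
  | _, _, .down _ _ _ rest => false :: rest.dirs

/-- A path is sparse if upsteps and downsteps alternate. -/
def Path.Sparse {X : PrePHDA σ} {x z : X.cell} (α : Path X x z) : Prop :=
  α.dirs.Chain' (· ≠ ·)

/-- Concatenation of paths. -/
def Path.comp {X : PrePHDA σ} : {x y z : X.cell} → Path X x y → Path X y z → Path X x z
  | _, _, _, .nil _, β => β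
  | _, _, _, .up y A h rest, β => .up y A h (rest.comp β)
  | _, _, _, .down y B h rest, β => .down y B h (rest.comp β)

/-- The ipomset recognized by a path, up to isomorphism: the gluing of the starters
and terminators of its steps (an identity for a constant path). -/
inductive Rec {X : PrePHDA σ} : ∀ {x z : X.cell}, Path X x z → PreIpomset σ → Prop
  | nil (x : X.cell) (R : PreIpomset σ) :
      Iso (X.ev x).idOf R → Rec (Path.nil x) R
  | up {x z : X.cell} (y : X.cell) (A : Set (X.ev y).carrier)
      (h : X.face y A ∅ = some x) (rest : Path X y z) {R' R : PreIpomset σ} :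
      Rec rest R' → GlueRel ((X.ev y).starter A) R' R → Rec (Path.up y A h rest) R
  | down {z w : X.cell} (y : X.cell) (B : Set (X.ev y).carrier)
      (h : X.face y ∅ B = some z) (rest : Path X z w) {R' R : PreIpomset σ} :
      Rec rest R' → GlueRel ((X.ev y).terminator B) R' R → Rec (Path.down y B h rest) R

/-- The language of a partial HDA. -/
def lang (X : PrePHDA σ) : Set (PreIpomset σ) :=
  {R | ∃ x z, ∃ α : Path X x z, x ∈ X.start ∧ z ∈ X.accept ∧ Rec α R}

/-- `X(K,P)`: cells reachable from `K` by a path recognizing `P`. -/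
def track (X : PrePHDA σ) (K : Set X.cell) (P : PreIpomset σ) : Set X.cell :=
  {x | ∃ s, ∃ α : Path X s x, s ∈ K ∧ Rec α P}

/-- Deterministic partial HDA: at most one initial cell per conclist, and lower
face maps are "injective" in the appropriate sense. -/
def Deterministic (X : PrePHDA σ) : Prop :=
  (∀ x y, x ∈ X.start → y ∈ X.start → Iso (X.ev x) (X.ev y) → x = y) ∧
  (∀ (y y' : X.cell) (A : Set (X.ev y).carrier) (A' : Set (X.ev y').carrier)
      (x : X.cell), X.face y A ∅ = some x → X.face y' A' ∅ = some x →
    (∃ f : (X.ev y).carrier ≃ (X.ev y').carrier,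
      (∀ u v, (X.ev y).evord u v ↔ (X.ev y').evord (f u) (f v)) ∧
      (∀ u, (X.ev y').lab (f u) = (X.ev y).lab u) ∧ f '' A = A') → y = y')

end PrePHDA

/-! ### Relational HDAs -/

/-- The data of a relational HDA: face relations instead of partial face maps. -/
structure PreRHDA (σ : Type) : Type 1 where
  cell : Type
  ev : cell → PreIpomset σ
  face : (x : cell) → Set (ev x).carrier → Set (ev x).carrier → Set cell
  start : Set cell
  accept : Set cell

namespace PreRHDA

variable {σ : Type}

/-- The axioms of a relational HDA, with the lax precubical identity
`δ_{C,D} ∘ δ_{A,B} ⊆ δ_{A∪C,B∪D}`. -/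
def IsRHDA (X : PreRHDA σ) : Prop :=
  (∀ x, (X.ev x).IsConclist) ∧
  (∀ x, X.face x ∅ ∅ = {x}) ∧
  (∀ x A B y, y ∈ X.face x A B →
    Disjoint A B ∧ ∃ g, IsFaceEmbed (X.ev x) (A ∪ B) (X.ev y) g) ∧
  (∀ x (A B : Set (X.ev x).carrier) y, y ∈ X.face x A B →
    ∀ g, IsFaceEmbed (X.ev x) (A ∪ B) (X.ev y) g →
      ∀ (C D : Set (X.ev y).carrier) z, z ∈ X.face y C D →
        z ∈ X.face x (A ∪ g '' C) (B ∪ g '' D))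

/-- Paths in a relational HDA. -/
inductive Path (X : PreRHDA σ) : X.cell → X.cell → Type 1
  | nil (x : X.cell) : Path X x x
  | up {x z : X.cell} (y : X.cell) (A : Set (X.ev y).carrier)
      (h : x ∈ X.face y A ∅) (rest : Path X y z) : Path X x z
  | down {z w : X.cell} (y : X.cell) (B : Set (X.ev y).carrier)
      (h : z ∈ X.face y ∅ B) (rest : Path X z w) : Path X y w

/-- The ipomset recognized by a path in a relational HDA. -/
inductive Rec {X : PreRHDA σ} : ∀ {x z : X.cell}, Path X x z → PreIpomset σ → Prop
  | nil (x : X.cell) (R : PreIpomset σ) :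
      Iso (X.ev x).idOf R → Rec (Path.nil x) R
  | up {x z : X.cell} (y : X.cell) (A : Set (X.ev y).carrier)
      (h : x ∈ X.face y A ∅) (rest : Path X y z) {R' R : PreIpomset σ} :
      Rec rest R' → GlueRel ((X.ev y).starter A) R' R → Rec (Path.up y A h rest) R
  | down {z w : X.cell} (y : X.cell) (B : Set (X.ev y).carrier)
      (h : z ∈ X.face y ∅ B) (rest : Path X z w) {R' R : PreIpomset σ} :
      Rec rest R' → GlueRel ((X.ev y).terminator B) R' R → Rec (Path.down y B h rest) R

/-- The language of a relational HDA. -/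
def lang (X : PreRHDA σ) : Set (PreIpomset σ) :=
  {R | ∃ x z, ∃ α : Path X x z, x ∈ X.start ∧ z ∈ X.accept ∧ Rec α R}

/-- The ST-automaton `ST(X)` of a relational HDA `X`: states are cells, transitions
mimic the starting and terminating of events. -/
def stAut (X : PreRHDA σ) : PAutomaton σ where
  Q := X.cell
  E := (Σ q : X.cell, Σ A : Set (X.ev q).carrier, {p : X.cell // p ∈ X.face q A ∅}) ⊕
       (Σ q : X.cell, Σ B : Set (X.ev q).carrier, {r : X.cell // r ∈ X.face q ∅ B})
  src := Sum.elim (fun t => t.2.2.val) fun t => t.1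
  tgt := Sum.elim (fun t => t.1) fun t => t.2.2.val
  lab := Sum.elim (fun t => (X.ev t.1).starter t.2.1) fun t => (X.ev t.1).terminator t.2.1
  mu := X.ev
  start := X.start
  accept := X.accept

end PreRHDA

/-! ### The partial HDA of a reduced gST-automaton -/

open PAutomaton

/-- The cell representing a state `q` in `X(𝒜)`: `q` is merged with a terminator
transition out of it or a starter transition into it, if such exists. -/
noncomputable def cellOfState (A : PAutomaton σ) (q : A.Q) : A.E ⊕ A.Q :=
  if h : ∃ e, IsTerminator (A.lab e) ∧ A.src e = q then Sum.inl h.choose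
  else if h' : ∃ e, IsStarter (A.lab e) ∧ A.tgt e = q then Sum.inl h'.choose
  else Sum.inr q

/-- `X(𝒜)`: cells are `(Q ⊔ E)/∼`, with the only defined (nontrivial) face maps
`δ⁰_{U∖S}([e]) = [s(e)]` and `δ¹_{U∖T}([e]) = [t(e)]` for `λ(e) = ⟨S,U,T⟩`. -/
noncomputable def XofA (A : PAutomaton σ) : PrePHDA σ where
  cell := A.E ⊕ A.Q
  ev := Sum.elim (fun e => (A.lab e).conclistOf) A.mu
  face := fun x =>
    match x with
    | Sum.inl e => fun As Bs =>
        if As = ∅ ∧ Bs = ∅ then some (Sum.inl e)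
        else if As = (A.lab e).Sᶜ ∧ Bs = ∅ then some (cellOfState A (A.src e))
        else if As = ∅ ∧ Bs = (A.lab e).Tᶜ then some (cellOfState A (A.tgt e))
        else none
    | Sum.inr q => fun As Bs =>
        if As = ∅ ∧ Bs = ∅ then some (Sum.inr q) else none
  start := cellOfState A '' A.start
  accept := cellOfState A '' A.accept

end HDA

namespace HDA

open PreIpomset PAutomaton in
private lemma rigid_aux {α : Type} [Finite α] (r : α → α → Prop)
    (hacyc : ∀ a, ¬ Relation.TransGen r a a)
    (htot : ∀ a b : α, a ≠ b → r a b ∨ r b a)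
    (f : α → α) (hinj : Function.Injective f) (hsurj : Function.Surjective f)
    (hpres : ∀ a b, r a b ↔ r (f a) (f b)) : ∀ a, f a = a := by
  have hirr : ∀ a, ¬ r a a := fun a h => hacyc a (Relation.TransGen.single h)
  have hasym : ∀ a b, r a b → r b a → False := fun a b h1 h2 =>
    hacyc a ((Relation.TransGen.single h1).trans (Relation.TransGen.single h2))
  have htrans : ∀ a b c, r a b → r b c → r a c := by
    intro a b c h1 h2
    rcases eq_or_ne a c with rfl | hne
    · exact absurd h2 (fun h => hasym a b h1 h)
    rcases htot a c hne with h | h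
    · exact h
    · exact absurd h fun h => hacyc a
        (((Relation.TransGen.single h1).trans (Relation.TransGen.single h2)).trans
          (Relation.TransGen.single h))
  have hD : ∀ a, f '' {b | r b a} = {c | r c (f a)} := by
    intro a
    ext c
    constructor
    · rintro ⟨b, hb, rfl⟩; exact (hpres b a).1 hb
    · intro hc
      obtain ⟨b, rfl⟩ := hsurj c
      refine ⟨b, ?_, rfl⟩
      by_contra hba
      rcases eq_or_ne b a with rfl | hne
      · exact hirr (f b) hc
      rcases htot b a hne with h | h
      · exact hba h
      · exact hasym _ _ hc ((hpres a b).1 h)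
  intro a
  by_contra h
  have hcard : ({b | r b a} : Set α).ncard = ({c | r c (f a)} : Set α).ncard := by
    rw [← hD a]; exact (Set.ncard_image_of_injective _ hinj).symm
  rcases htot (f a) a h with h1 | h1
  · have hss : ({c | r c (f a)} : Set α) ⊂ {b | r b a} := by
      rw [Set.ssubset_def]
      refine ⟨fun c hc => htrans c (f a) a hc h1, fun hsub => hirr (f a) (hsub h1)⟩
    have := Set.ncard_lt_ncard hss (Set.toFinite _)
    omega
  · have hss : ({b | r b a} : Set α) ⊂ {c | r c (f a)} := by
      rw [Set.ssubset_def]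
      refine ⟨fun b hb => htrans b a (f a) hb h1, fun hsub => hirr a (hsub h1)⟩
    have := Set.ncard_lt_ncard hss (Set.toFinite _)
    omega

open PreIpomset PAutomaton in
private lemma cellOfState_src' {σ : Type} (A : PAutomaton σ) (hr : A.Reduced) (e : A.E)
    (hS : (A.lab e).S ≠ Set.univ) : cellOfState A (A.src e) = Sum.inr (A.src e) := by
  obtain ⟨-, hb, hc, hd, he, hf, -⟩ := hr
  have h1 : ¬ ∃ e', IsTerminator (A.lab e') ∧ A.src e' = A.src e := by
    rintro ⟨e', ht, hsrc⟩
    have hstart : A.src e' ∈ A.start := he e' ht.2.2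
    have heq : e = e' := hf e' e hstart hsrc.symm
    rw [heq] at hS
    exact hS ht.2.2
  have h2 : ¬ ∃ e', IsStarter (A.lab e') ∧ A.tgt e' = A.src e := by
    rintro ⟨e', hst, htgt⟩
    have hacc : A.tgt e' ∈ A.accept := hd e' hst.2.2
    rw [htgt] at hacc
    exact hc e hacc
  unfold cellOfState
  rw [dif_neg h1, dif_neg h2]

open PreIpomset PAutomaton in
private lemma cellOfState_tgt' {σ : Type} (A : PAutomaton σ) (hr : A.Reduced) (e : A.E)
    (hT : (A.lab e).T ≠ Set.univ) : cellOfState A (A.tgt e) = Sum.inr (A.tgt e) := by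
  obtain ⟨-, hb, hc, hd, he, hf, hgg⟩ := hr
  have h1 : ¬ ∃ e', IsTerminator (A.lab e') ∧ A.src e' = A.tgt e := by
    rintro ⟨e', ht, hsrc⟩
    have hstart : A.src e' ∈ A.start := he e' ht.2.2
    rw [hsrc] at hstart
    exact hb e hstart
  have h2 : ¬ ∃ e', IsStarter (A.lab e') ∧ A.tgt e' = A.tgt e := by
    rintro ⟨e', hst, htgt⟩
    have hacc : A.tgt e' ∈ A.accept := hd e' hst.2.2
    have heq : e = e' := hgg e' e hacc htgt.symm
    rw [heq] at hT
    exact hT hst.2.2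
  unfold cellOfState
  rw [dif_neg h1, dif_neg h2]
/-- For a reduced gST-automaton `𝒜`, the structure `X(𝒜)` is a partial
HDA (in particular it satisfies the lax precubical identity); in fact no two of its
nontrivial face maps are composable. -/
theorem XofA_is_phda {σ : Type} [Finite σ] (A : PAutomaton σ)
    (hA : A.IsPA) (hg : A.IsGST) (hr : A.Reduced) :
    (XofA A).IsPHDA ∧
    (∀ (x : (XofA A).cell) (As Bs : Set ((XofA A).ev x).carrier) (y : (XofA A).cell),
      (XofA A).face x As Bs = some y → ¬(As = ∅ ∧ Bs = ∅) →
      ∀ (C D : Set ((XofA A).ev y).carrier) (z : (XofA A).cell),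
        (XofA A).face y C D = some z → C = ∅ ∧ D = ∅) := by
  obtain ⟨hQfin, hEfin, hmu, hlabip, hsrciso, htgtiso⟩ := hA
  -- the identity face is always defined
  have hid : ∀ x : (XofA A).cell, (XofA A).face x ∅ ∅ = some x := by
    intro x
    cases x with
    | inl e => exact if_pos ⟨rfl, rfl⟩
    | inr q => exact if_pos ⟨rfl, rfl⟩
  -- key: every nontrivially-obtained face is a state cell
  have key : ∀ (e : A.E) (As Bs : Set (A.lab e).carrier) (y : (XofA A).cell),
      (XofA A).face (Sum.inl e) As Bs = some y → ¬(As = ∅ ∧ Bs = ∅) →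
      ∃ q : A.Q, y = Sum.inr q := by
    intro e As Bs y hxy hnt
    have hxy' : (if As = ∅ ∧ Bs = ∅ then some (Sum.inl e : (XofA A).cell)
        else if As = (A.lab e).Sᶜ ∧ Bs = ∅ then some (cellOfState A (A.src e))
        else if As = ∅ ∧ Bs = (A.lab e).Tᶜ then some (cellOfState A (A.tgt e))
        else none) = some y := hxy
    rw [if_neg hnt] at hxy'
    split_ifs at hxy' with h2 h3
    · obtain ⟨rfl, rfl⟩ := h2
      have hS : (A.lab e).S ≠ Set.univ := fun h => hnt ⟨by rw [h, Set.compl_univ], rfl⟩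
      rw [cellOfState_src' A hr e hS] at hxy'
      injection hxy' with h
      exact ⟨A.src e, h.symm⟩
    · obtain ⟨rfl, rfl⟩ := h3
      have hT : (A.lab e).T ≠ Set.univ := fun h => hnt ⟨rfl, by rw [h, Set.compl_univ]⟩
      rw [cellOfState_tgt' A hr e hT] at hxy'
      injection hxy' with h
      exact ⟨A.tgt e, h.symm⟩
  have key' : ∀ (x : (XofA A).cell) (As Bs : Set ((XofA A).ev x).carrier) (y : (XofA A).cell),
      (XofA A).face x As Bs = some y → ¬(As = ∅ ∧ Bs = ∅) →
      ∃ q : A.Q, y = Sum.inr q := by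
    intro x
    cases x with
    | inl e => exact key e
    | inr q =>
      intro As Bs y hxy hnt
      have hxy' : (if As = ∅ ∧ Bs = ∅ then some (Sum.inr q : (XofA A).cell) else none)
          = some y := hxy
      rw [if_neg hnt] at hxy'
      exact absurd hxy' (by simp)
  -- part 2
  have part2 : ∀ (x : (XofA A).cell) (As Bs : Set ((XofA A).ev x).carrier) (y : (XofA A).cell),
      (XofA A).face x As Bs = some y → ¬(As = ∅ ∧ Bs = ∅) →
      ∀ (C D : Set ((XofA A).ev y).carrier) (z : (XofA A).cell),
        (XofA A).face y C D = some z → C = ∅ ∧ D = ∅ := by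
    intro x As Bs y hxy hnt C D z hz
    obtain ⟨q, rfl⟩ := key' x As Bs y hxy hnt
    have hz' : (if C = ∅ ∧ D = ∅ then some (Sum.inr q : (XofA A).cell) else none)
        = some z := hz
    by_contra hcd
    rw [if_neg hcd] at hz'
    exact absurd hz' (by simp)
  refine ⟨⟨?_, hid, ?_, ?_⟩, part2⟩
  -- every cell is labelled by a conclist
  · intro x
    cases x with
    | inl e =>
      have hip := hlabip e
      exact ⟨⟨hip.lt_trans, hip.lt_irrefl, hip.evord_acyclic, hip.total, hip.lt_not_evord,
        fun a ha => absurd ha (Set.notMem_empty a),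
        fun a ha => absurd ha (Set.notMem_empty a), hip.interval⟩, hg e, rfl, rfl⟩
    | inr q => exact hmu q
  -- defined faces are along embeddings
  · intro x As Bs y hxy
    cases x with
    | inl e =>
      have hxy' : (if As = ∅ ∧ Bs = ∅ then some (Sum.inl e : (XofA A).cell)
          else if As = (A.lab e).Sᶜ ∧ Bs = ∅ then some (cellOfState A (A.src e))
          else if As = ∅ ∧ Bs = (A.lab e).Tᶜ then some (cellOfState A (A.tgt e))
          else none) = some y := hxy
      split_ifs at hxy' with h1 h2 h3
      · obtain ⟨rfl, rfl⟩ := h1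
        injection hxy' with hy
        subst hy
        exact ⟨by simp, id, fun a b h => h, by simp, fun u v => Iff.rfl, fun u => rfl⟩
      · obtain ⟨rfl, rfl⟩ := h2
        have hS : (A.lab e).S ≠ Set.univ := fun h => h1 ⟨by rw [h, Set.compl_univ]; rfl, rfl⟩
        rw [cellOfState_src' A hr e hS] at hxy'
        injection hxy' with hy
        subst hy
        obtain ⟨f, hflt, hfev, hfS, hfT, hflab⟩ := hsrciso e
        refine ⟨by exact Set.disjoint_empty _, fun u => (f.symm u).val, ?_, ?_, ?_, ?_⟩
        · intro a b h
          exact f.symm.injective (Subtype.ext h)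
        · ext a
          change a ∈ Set.range (fun u => (f.symm u).val) ↔ a ∈ ((A.lab e).Sᶜ ∪ (∅ : Set (A.lab e).carrier))ᶜ
          simp only [Set.mem_range, Set.union_empty, compl_compl]
          constructor
          · rintro ⟨u, rfl⟩; exact (f.symm u).property
          · intro ha; exact ⟨f ⟨a, ha⟩, congrArg Subtype.val (f.symm_apply_apply ⟨a, ha⟩)⟩
        · intro u v
          have h := hfev (f.symm u) (f.symm v)
          rw [f.apply_symm_apply u, f.apply_symm_apply v] at h
          exact h.symm
        · intro u
          have h := hflab (f.symm u)
          rw [f.apply_symm_apply u] at h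
          exact h.symm
      · obtain ⟨rfl, rfl⟩ := h3
        have hT : (A.lab e).T ≠ Set.univ := fun h => h1 ⟨rfl, by rw [h, Set.compl_univ]; rfl⟩
        rw [cellOfState_tgt' A hr e hT] at hxy'
        injection hxy' with hy
        subst hy
        obtain ⟨f, hflt, hfev, hfS, hfT, hflab⟩ := htgtiso e
        refine ⟨by exact Set.empty_disjoint _, fun u => (f.symm u).val, ?_, ?_, ?_, ?_⟩
        · intro a b h
          exact f.symm.injective (Subtype.ext h)
        · ext a
          change a ∈ Set.range (fun u => (f.symm u).val) ↔ a ∈ ((∅ : Set (A.lab e).carrier) ∪ (A.lab e).Tᶜ)ᶜ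
          simp only [Set.mem_range, Set.empty_union, compl_compl]
          constructor
          · rintro ⟨u, rfl⟩; exact (f.symm u).property
          · intro ha; exact ⟨f ⟨a, ha⟩, congrArg Subtype.val (f.symm_apply_apply ⟨a, ha⟩)⟩
        · intro u v
          have h := hfev (f.symm u) (f.symm v)
          rw [f.apply_symm_apply u, f.apply_symm_apply v] at h
          exact h.symm
        · intro u
          have h := hflab (f.symm u)
          rw [f.apply_symm_apply u] at h
          exact h.symm
    | inr q =>
      have hxy' : (if As = ∅ ∧ Bs = ∅ then some (Sum.inr q : (XofA A).cell) else none)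
          = some y := hxy
      split_ifs at hxy' with h1
      obtain ⟨rfl, rfl⟩ := h1
      injection hxy' with hy
      subst hy
      exact ⟨by simp, id, fun a b h => h, by simp, fun u v => Iff.rfl, fun u => rfl⟩
  -- the lax precubical identity
  · intro x As Bs y hxy g hge C D z hz
    by_cases hnt : As = ∅ ∧ Bs = ∅
    · obtain ⟨rfl, rfl⟩ := hnt
      have hyx : y = x := (Option.some_injective _ ((hid x).symm.trans hxy)).symm
      subst hyx
      cases y with
      | inr q =>
        have hz' : (if C = ∅ ∧ D = ∅ then some (Sum.inr q : (XofA A).cell) else none)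
            = some z := hz
        split_ifs at hz' with h1
        obtain ⟨rfl, rfl⟩ := h1
        injection hz' with hzz
        subst hzz
        simp only [Set.image_empty, Set.union_empty]
        exact hid _
      | inl e =>
        obtain ⟨ginj, grange, gev, glab⟩ := hge
        haveI : Finite (A.lab e).carrier := (A.lab e).fin
        have gsurj : Function.Surjective g := fun a => by
          have h : a ∈ Set.range g := by rw [grange]; simp
          exact h
        have hip := hlabip e
        have gid : ∀ a, g a = a := by
          refine rigid_aux (A.lab e).evord hip.evord_acyclic ?_ g ginj gsurj
            (fun a b => gev a b)
          intro a b hne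
          rcases hip.total a b hne with h | h | h | h
          · exact absurd h (hg e a b)
          · exact absurd h (hg e b a)
          · exact Or.inl h
          · exact Or.inr h
        have himg : ∀ K : Set ((XofA A).ev (Sum.inl e)).carrier, g '' K = K := by
          intro K
          ext a
          constructor
          · rintro ⟨b, hb, rfl⟩; rwa [gid b]
          · intro ha; exact ⟨a, ha, gid a⟩
        have hgC : g '' C = C := himg C
        have hgD : g '' D = D := himg D
        simp only [Set.empty_union, hgC, hgD]
        exact hz
    · obtain ⟨q, rfl⟩ := key' x As Bs y hxy hnt
      have hz' : (if C = ∅ ∧ D = ∅ then some (Sum.inr q : (XofA A).cell) else none)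
          = some z := hz
      split_ifs at hz' with h1
      obtain ⟨rfl, rfl⟩ := h1
      injection hz' with hzz
      subst hzz
      simp only [Set.image_empty, Set.union_empty]
      exact hxy

end HDA
end

section
/- Let 𝒜 be a reduced gST-automaton and X(𝒜) the associated partial HDA (cells (Q ⊔ E)/∼ with e ∼ s(e) if λ(e) is a terminator and e ∼ t(e) if λ(e) is a starter; only defined face maps δ⁰_{U∖S}([e]) = [s(e)] and δ¹_{U∖T}([e]) = [t(e)] for λ(e) = ⟨S,U,T⟩; initial and accepting cells inherited from 𝒜). Then L(X(𝒜)) = L(𝒜). -/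
open scoped Classical

namespace HDA



open PreIpomset

variable {σ : Type}

namespace PreIpomset

/-! #### Basic facts about isomorphisms -/

lemma iso_refl (P : PreIpomset σ) : Iso P P :=
  ⟨Equiv.refl _, fun _ _ => Iff.rfl, fun _ _ => Iff.rfl, fun _ => Iff.rfl, fun _ => Iff.rfl,
    fun _ => rfl⟩

lemma iso_symm {P Q : PreIpomset σ} (h : Iso P Q) : Iso Q P := by
  obtain ⟨f, h1, h2, h3, h4, h5⟩ := h
  refine ⟨f.symm, fun x y => ?_, fun x y => ?_, fun x => ?_, fun x => ?_, fun x => ?_⟩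
  · rw [h1]; simp
  · rw [h2]; simp
  · rw [h3]; simp
  · rw [h4]; simp
  · rw [← h5]; simp

lemma iso_trans {P Q R : PreIpomset σ} (h : Iso P Q) (h' : Iso Q R) : Iso P R := by
  obtain ⟨f, h1, h2, h3, h4, h5⟩ := h
  obtain ⟨g, g1, g2, g3, g4, g5⟩ := h'
  exact ⟨f.trans g, fun x y => (h1 x y).trans (g1 _ _), fun x y => (h2 x y).trans (g2 _ _),
    fun x => (h3 x).trans (g3 _), fun x => (h4 x).trans (g4 _),
    fun x => (g5 (f x)).trans (h5 x)⟩

lemma iso_idOf {P Q : PreIpomset σ} (h : Iso P Q) : Iso P.idOf Q.idOf := by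
  obtain ⟨f, h1, h2, _, _, h5⟩ := h
  exact ⟨f, h1, h2, fun _ => Iff.rfl, fun _ => Iff.rfl, h5⟩

/-! #### Conclist equivalences (ignore precedence and interfaces) -/

structure CEquiv (P Q : PreIpomset σ) : Type where
  g : P.carrier ≃ Q.carrier
  hev : ∀ x y, P.evord x y ↔ Q.evord (g x) (g y)
  hlab : ∀ x, Q.lab (g x) = P.lab x

def CEquiv.refl (P : PreIpomset σ) : CEquiv P P :=
  ⟨Equiv.refl _, fun _ _ => Iff.rfl, fun _ => rfl⟩

def CEquiv.symm {P Q : PreIpomset σ} (c : CEquiv P Q) : CEquiv Q P :=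
  ⟨c.g.symm, fun x y => by rw [c.hev]; simp, fun x => by rw [← c.hlab]; simp⟩

def CEquiv.trans {P Q R : PreIpomset σ} (c : CEquiv P Q) (d : CEquiv Q R) : CEquiv P R :=
  ⟨c.g.trans d.g, fun x y => (c.hev x y).trans (d.hev _ _),
    fun x => (d.hlab _).trans (c.hlab x)⟩

noncomputable def CEquiv.ofIso {P Q : PreIpomset σ} (h : Iso P Q) : CEquiv P Q :=
  ⟨h.choose, h.choose_spec.2.1, h.choose_spec.2.2.2.2⟩

noncomputable def cEquivRestrictUniv (P : PreIpomset σ) : CEquiv (P.restrict Set.univ) P :=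
  ⟨⟨fun x => x.1, fun a => ⟨a, trivial⟩, fun _ => rfl, fun _ => rfl⟩,
    fun _ _ => Iff.rfl, fun _ => rfl⟩

def cEquivConclistOf (P : PreIpomset σ) : CEquiv P.conclistOf P :=
  ⟨Equiv.refl _, fun _ _ => Iff.rfl, fun _ => rfl⟩

def cEquivIdOf (P : PreIpomset σ) : CEquiv P.idOf P :=
  ⟨Equiv.refl _, fun _ _ => Iff.rfl, fun _ => rfl⟩

lemma iso_idOf_of_cequiv {P Q : PreIpomset σ} (c : CEquiv P Q) (h1 : P.Discrete)
    (h2 : Q.Discrete) : Iso P.idOf Q.idOf :=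
  ⟨c.g, fun x y => iff_of_false (h1 x y) (h2 _ _), c.hev, fun _ => Iff.rfl, fun _ => Iff.rfl,
    c.hlab⟩

/-! #### Rigidity of conclists -/

lemma evord_rigid {P : PreIpomset σ} (hP : P.IsIpomset) (hd : P.Discrete)
    (f : P.carrier ≃ P.carrier) (hf : ∀ x y, P.evord x y ↔ P.evord (f x) (f y)) :
    ∀ x, f x = x := by
  haveI := P.fin
  intro x
  by_contra hne
  have hiter : ∀ (k : ℕ) (a b : P.carrier), P.evord a b → P.evord (f^[k] a) (f^[k] b) := by
    intro k
    induction k with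
    | zero => intro a b h; exact h
    | succ n ih =>
      intro a b h
      rw [Function.iterate_succ_apply', Function.iterate_succ_apply']
      exact (hf _ _).mp (ih a b h)
  obtain ⟨n, hn, hfix⟩ : ∃ n, 0 < n ∧ f^[n] x = x := by
    obtain ⟨i, j, hij, heq⟩ := Finite.exists_ne_map_eq_of_infinite (fun n : ℕ => f^[n] x)
    rcases Nat.lt_or_ge i j with hlt | hge
    · refine ⟨j - i, by omega, ?_⟩
      apply f.injective.iterate i
      rw [← Function.iterate_add_apply, show i + (j - i) = j by omega]
      exact heq.symm
    · have hlt : j < i := lt_of_le_of_ne hge (Ne.symm hij)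
      refine ⟨i - j, by omega, ?_⟩
      apply f.injective.iterate j
      rw [← Function.iterate_add_apply, show j + (i - j) = i by omega]
      exact heq
  have hx : x ≠ f x := fun h => hne h.symm
  rcases hP.total x (f x) hx with h | h | h | h
  · exact hd _ _ h
  · exact hd _ _ h
  · -- chain upwards
    have chain : ∀ k : ℕ, Relation.TransGen P.evord x (f^[k + 1] x) := by
      intro k
      induction k with
      | zero => exact Relation.TransGen.single (by simpa using h)
      | succ n ih =>
        refine Relation.TransGen.tail ih ?_
        have := hiter (n + 1) x (f x) h
        rwa [← Function.iterate_succ_apply] at this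
    have : Relation.TransGen P.evord x x := by
      have := chain (n - 1)
      rwa [show n - 1 + 1 = n by omega, hfix] at this
    exact hP.evord_acyclic x this
  · have chain : ∀ k : ℕ, Relation.TransGen P.evord (f^[k + 1] x) x := by
      intro k
      induction k with
      | zero => exact Relation.TransGen.single (by simpa using h)
      | succ n ih =>
        refine Relation.TransGen.head ?_ ih
        have := hiter (n + 1) (f x) x h
        rwa [← Function.iterate_succ_apply] at this
    have : Relation.TransGen P.evord x x := by
      have := chain (n - 1)
      rwa [show n - 1 + 1 = n by omega, hfix] at this
    exact hP.evord_acyclic x this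

end PreIpomset

namespace PreIpomset

/-! #### Basic computations for gluings -/

section GlueBasics

variable {σ : Type} {P Q : PreIpomset σ} (m : Matching P Q)

lemma gluePOf_inl (x : P.carrier) : gluePOf P Q (Sum.inl x) = some x := rfl

lemma gluePOf_eq_some {u} {a : P.carrier} (h : gluePOf P Q u = some a) : u = Sum.inl a := by
  cases u with
  | inl x => exact congrArg Sum.inl (Option.some.inj h)
  | inr y => cases h

lemma glueQOf_inl_pos {x : P.carrier} (h : x ∈ P.T) :
    glueQOf P Q m (Sum.inl x) = some (m.g ⟨x, h⟩).val := dif_pos h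

lemma glueQOf_inl_neg {x : P.carrier} (h : x ∉ P.T) :
    glueQOf P Q m (Sum.inl x) = none := dif_neg h

lemma glueQOf_inr (y : {y : Q.carrier // y ∉ Q.S}) :
    glueQOf P Q m (Sum.inr y) = some y.val := rfl

lemma inl_mem_glue_S {x : P.carrier} : (Sum.inl x) ∈ (glue P Q m).S ↔ x ∈ P.S := by
  constructor
  · rintro ⟨a, ha, haS⟩
    obtain rfl : x = a := Option.some.inj ha
    exact haS
  · intro h; exact ⟨x, rfl, h⟩

lemma inr_not_mem_glue_S {y : {y : Q.carrier // y ∉ Q.S}} :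
    (Sum.inr y) ∉ (glue P Q m).S := by
  rintro ⟨a, ha, -⟩
  cases ha

lemma glue_evord_inl_inl {x y : P.carrier} :
    (glue P Q m).evord (Sum.inl x) (Sum.inl y) ↔ P.evord x y := by
  constructor
  · rintro (⟨a, b, ha, hb, hab⟩ | ⟨a, b, ha, hb, hab⟩)
    · obtain rfl : x = a := Option.some.inj ha
      obtain rfl : y = b := Option.some.inj hb
      exact hab
    · by_cases hx : x ∈ P.T
      · by_cases hy : y ∈ P.T
        · rw [glueQOf_inl_pos m hx] at ha
          rw [glueQOf_inl_pos m hy] at hb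
          obtain rfl := Option.some.inj ha
          obtain rfl := Option.some.inj hb
          exact (m.evord_iff ⟨x, hx⟩ ⟨y, hy⟩).mpr hab
        · rw [glueQOf_inl_neg m hy] at hb
          cases hb
      · rw [glueQOf_inl_neg m hx] at ha
        cases ha
  · intro hxy; exact Or.inl ⟨x, y, rfl, rfl, hxy⟩

/-- The equivalence between the source interface of a gluing and that of its left factor. -/
noncomputable def glueSEquiv :
    {u : (glue P Q m).carrier // u ∈ (glue P Q m).S} ≃ {x : P.carrier // x ∈ P.S} where
  toFun := fun w => match w with
    | ⟨Sum.inl x, hw⟩ => ⟨x, (inl_mem_glue_S m).mp hw⟩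
    | ⟨Sum.inr _, hw⟩ => absurd hw (inr_not_mem_glue_S m)
  invFun := fun a => ⟨Sum.inl a.val, (inl_mem_glue_S m).mpr a.property⟩
  left_inv := by
    rintro ⟨x | y, hw⟩
    · rfl
    · exact absurd hw (inr_not_mem_glue_S m)
  right_inv := fun a => rfl

lemma glueSEquiv_val (w : {u : (glue P Q m).carrier // u ∈ (glue P Q m).S}) :
    w.val = Sum.inl ((glueSEquiv m) w).val := by
  rcases w with ⟨x | y, hw⟩
  · rfl
  · exact absurd hw (inr_not_mem_glue_S m)

noncomputable def cEquivGlueS : CEquiv ((glue P Q m).srcIface) (P.srcIface) where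
  g := glueSEquiv m
  hev := fun w w' => by
    show (glue P Q m).evord w.val w'.val ↔ P.evord _ _
    rw [glueSEquiv_val m w, glueSEquiv_val m w']
    exact glue_evord_inl_inl m
  hlab := fun w => by
    show P.lab _ = (glue P Q m).lab w.val
    rw [glueSEquiv_val m w]
    rfl

end GlueBasics

section MoreCEquiv

variable {σ : Type}

noncomputable def cEquivSrcIface {P Q : PreIpomset σ} (h : Iso P Q) :
    CEquiv P.srcIface Q.srcIface where
  g := { toFun := fun w => ⟨h.choose w.val, (h.choose_spec.2.2.1 w.val).mp w.property⟩
         invFun := fun v => ⟨h.choose.symm v.val, (h.choose_spec.2.2.1 _).mpr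
           (by rw [Equiv.apply_symm_apply]; exact v.property)⟩
         left_inv := fun w => Subtype.ext (h.choose.symm_apply_apply w.val)
         right_inv := fun v => Subtype.ext (h.choose.apply_symm_apply v.val) }
  hev := fun w w' => h.choose_spec.2.1 w.val w'.val
  hlab := fun w => h.choose_spec.2.2.2.2 w.val

def Matching.ofCEquiv {P Q : PreIpomset σ} (c : CEquiv P.tgtIface Q.srcIface) :
    Matching P Q :=
  ⟨c.g, c.hev, c.hlab⟩

noncomputable def matchingOfIdOfIso {P R : PreIpomset σ} (h : Iso P.idOf R) :
    Matching P.idOf R where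
  g := { toFun := fun w => ⟨h.choose w.val, (h.choose_spec.2.2.1 w.val).mp trivial⟩
         invFun := fun v => ⟨h.choose.symm v.val, trivial⟩
         left_inv := fun w => Subtype.ext (h.choose.symm_apply_apply w.val)
         right_inv := fun v => Subtype.ext (h.choose.apply_symm_apply v.val) }
  evord_iff := fun w w' => h.choose_spec.2.1 w.val w'.val
  lab_eq := fun w => h.choose_spec.2.2.2.2 w.val

/-! #### Structure equalities -/

lemma starter_eq (P : PreIpomset σ) :
    P.conclistOf.starter P.Sᶜ = ({P with T := Set.univ} : PreIpomset σ) := by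
  show PreIpomset.mk P.carrier P.fin P.lt P.evord P.Sᶜᶜ Set.univ P.lab = _
  rw [compl_compl]

lemma terminator_eq (P : PreIpomset σ) :
    P.conclistOf.terminator P.Tᶜ = ({P with S := Set.univ} : PreIpomset σ) := by
  show PreIpomset.mk P.carrier P.fin P.lt P.evord Set.univ P.Tᶜᶜ P.lab = _
  rw [compl_compl]

lemma updS_eq {P : PreIpomset σ} (hS : P.S = Set.univ) :
    ({P with S := Set.univ} : PreIpomset σ) = P := by
  rw [← hS]

lemma updT_eq {P : PreIpomset σ} (hT : P.T = Set.univ) :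
    ({P with T := Set.univ} : PreIpomset σ) = P := by
  rw [← hT]

lemma updS_idOf {P : PreIpomset σ} (hT : P.T = Set.univ) :
    ({P with S := Set.univ} : PreIpomset σ) = P.conclistOf.idOf := by
  show _ = PreIpomset.mk P.carrier P.fin P.lt P.evord Set.univ Set.univ P.lab
  rw [← hT]

end MoreCEquiv

end PreIpomset
namespace PreIpomset

variable {σ : Type}

lemma GlueRel.trans_iso {P Q R R' : PreIpomset σ} (h : GlueRel P Q R) (h2 : Iso R R') :
    GlueRel P Q R' := by
  obtain ⟨m, i⟩ := h
  exact ⟨m, iso_trans i h2⟩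

/-! #### Identity gluings -/

lemma unit_glue_iso {P Q : PreIpomset σ} (hd : P.Discrete) (hS : P.S = Set.univ)
    (hT : P.T = Set.univ) (m : Matching P Q) : Iso (glue P Q m) Q := by
  have hTm : ∀ x : P.carrier, x ∈ P.T := fun x => by rw [hT]; exact Set.mem_univ x
  let F : (glue P Q m).carrier → Q.carrier := fun u =>
    Sum.rec (fun x => (m.g ⟨x, hTm x⟩).val) (fun y => y.val) u
  have hkey : ∀ u, glueQOf P Q m u = some (F u) := by
    rintro (x | y)
    · exact glueQOf_inl_pos m (hTm x)
    · rfl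
  have hbij : Function.Bijective F := by
    constructor
    · rintro (x | y) (x' | y') hxy
      · have h' : (⟨x, hTm x⟩ : {a // a ∈ P.T}) = ⟨x', hTm x'⟩ :=
          m.g.injective (Subtype.ext hxy)
        exact congrArg Sum.inl (congrArg Subtype.val h')
      · have h' : (m.g ⟨x, hTm x⟩).val = y'.val := hxy
        exact absurd (h' ▸ (m.g ⟨x, hTm x⟩).property) y'.property
      · have h' : (m.g ⟨x', hTm x'⟩).val = y.val := hxy.symm
        exact absurd (h' ▸ (m.g ⟨x', hTm x'⟩).property) y.property
      · have h' : y.val = y'.val := hxy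
        exact congrArg Sum.inr (Subtype.ext h')
    · intro q
      by_cases hq : q ∈ Q.S
      · refine ⟨Sum.inl (m.g.symm ⟨q, hq⟩).val, ?_⟩
        show (m.g ⟨(m.g.symm ⟨q, hq⟩).val, _⟩).val = q
        rw [Subtype.coe_eta, Equiv.apply_symm_apply]
      · exact ⟨Sum.inr ⟨q, hq⟩, rfl⟩
  refine ⟨Equiv.ofBijective F hbij, ?_, ?_, ?_, ?_, ?_⟩
  · intro u v
    constructor
    · rintro (⟨a, b, ha, hb, hab⟩ | ⟨a, b, ha, hb, hab⟩ | ⟨⟨a, ha, haT⟩, -⟩)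
      · exact absurd hab (hd a b)
      · rw [hkey u] at ha
        rw [hkey v] at hb
        obtain rfl := Option.some.inj ha
        obtain rfl := Option.some.inj hb
        exact hab
      · exact absurd (hTm a) haT
    · intro hlt
      exact Or.inr (Or.inl ⟨F u, F v, hkey u, hkey v, hlt⟩)
  · intro u v
    constructor
    · rintro (⟨a, b, ha, hb, hab⟩ | ⟨a, b, ha, hb, hab⟩)
      · obtain rfl := gluePOf_eq_some ha
        obtain rfl := gluePOf_eq_some hb
        exact (m.evord_iff ⟨a, hTm a⟩ ⟨b, hTm b⟩).mp hab
      · rw [hkey u] at ha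
        rw [hkey v] at hb
        obtain rfl := Option.some.inj ha
        obtain rfl := Option.some.inj hb
        exact hab
    · intro hev
      exact Or.inr ⟨F u, F v, hkey u, hkey v, hev⟩
  · intro u
    cases u with
    | inl x =>
      exact iff_of_true ((inl_mem_glue_S m).mpr (by rw [hS]; exact Set.mem_univ x))
        (m.g ⟨x, hTm x⟩).property
    | inr y => exact iff_of_false (inr_not_mem_glue_S m) y.property
  · intro u
    constructor
    · rintro ⟨a, ha, haT⟩
      rw [hkey u] at ha
      obtain rfl := Option.some.inj ha
      exact haT
    · intro h
      exact ⟨F u, hkey u, h⟩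
  · rintro (x | y)
    · exact m.lab_eq ⟨x, hTm x⟩
    · rfl

lemma glueRel_identity_iso {I Q R : PreIpomset σ} (hd : I.Discrete) (hS : I.S = Set.univ)
    (hT : I.T = Set.univ) (h : GlueRel I Q R) : Iso Q R := by
  obtain ⟨m, i⟩ := h
  exact iso_trans (iso_symm (unit_glue_iso hd hS hT m)) i

lemma glueRel_self_of_identity {I R : PreIpomset σ} (hd : I.Discrete) (hS : I.S = Set.univ)
    (hT : I.T = Set.univ) (m : Matching I R) : GlueRel I R R :=
  ⟨m, unit_glue_iso hd hS hT m⟩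

/-! #### Splitting a discrete ipomset into terminator and starter parts of a gluing -/

lemma glue_split {P Q R : PreIpomset σ} (hd : P.Discrete) (h : GlueRel P Q R) :
    ∃ R₁, GlueRel ({P with S := Set.univ} : PreIpomset σ) Q R₁ ∧
      GlueRel ({P with T := Set.univ} : PreIpomset σ) R₁ R := by
  obtain ⟨m, hiso⟩ := h
  let Pt : PreIpomset σ := {P with S := Set.univ}
  let Ps : PreIpomset σ := {P with T := Set.univ}
  let mt : Matching Pt Q := ⟨m.g, m.evord_iff, m.lab_eq⟩
  let W := glue Pt Q mt
  let m' : Matching Ps W := Matching.ofCEquiv ((cEquivGlueS mt).symm)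
  have hPsT : ∀ x : P.carrier, x ∈ Ps.T := fun x => Set.mem_univ x
  have hPOf : ∀ u, gluePOf Pt Q u = gluePOf P Q u := by rintro (x | y) <;> rfl
  have hQOf : ∀ u, glueQOf Pt Q mt u = glueQOf P Q m u := by rintro (x | y) <;> rfl
  have hltW : ∀ u v, (glue P Q m).lt u v ↔ W.lt u v := by
    intro u v
    constructor
    · rintro (⟨a, b, ha, hb, hab⟩ | ⟨a, b, ha, hb, hab⟩ | ⟨⟨a, ha, haT⟩, ⟨b, hb, hbS⟩⟩)
      · exact Or.inl ⟨a, b, (hPOf _).trans ha, (hPOf _).trans hb, hab⟩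
      · exact Or.inr (Or.inl ⟨a, b, (hQOf _).trans ha, (hQOf _).trans hb, hab⟩)
      · exact Or.inr (Or.inr ⟨⟨a, (hPOf _).trans ha, haT⟩, ⟨b, (hQOf _).trans hb, hbS⟩⟩)
    · rintro (⟨a, b, ha, hb, hab⟩ | ⟨a, b, ha, hb, hab⟩ | ⟨⟨a, ha, haT⟩, ⟨b, hb, hbS⟩⟩)
      · exact Or.inl ⟨a, b, (hPOf _).symm.trans ha, (hPOf _).symm.trans hb, hab⟩
      · exact Or.inr (Or.inl ⟨a, b, (hQOf _).symm.trans ha, (hQOf _).symm.trans hb, hab⟩)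
      · exact Or.inr (Or.inr ⟨⟨a, (hPOf _).symm.trans ha, haT⟩, ⟨b, (hQOf _).symm.trans hb, hbS⟩⟩)
  have hevW : ∀ u v, (glue P Q m).evord u v ↔ W.evord u v := by
    intro u v
    constructor
    · rintro (⟨a, b, ha, hb, hab⟩ | ⟨a, b, ha, hb, hab⟩)
      · exact Or.inl ⟨a, b, (hPOf _).trans ha, (hPOf _).trans hb, hab⟩
      · exact Or.inr ⟨a, b, (hQOf _).trans ha, (hQOf _).trans hb, hab⟩
    · rintro (⟨a, b, ha, hb, hab⟩ | ⟨a, b, ha, hb, hab⟩)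
      · exact Or.inl ⟨a, b, (hPOf _).symm.trans ha, (hPOf _).symm.trans hb, hab⟩
      · exact Or.inr ⟨a, b, (hQOf _).symm.trans ha, (hQOf _).symm.trans hb, hab⟩
  have hTW : ∀ u, u ∈ (glue P Q m).T ↔ u ∈ W.T := by
    intro u
    constructor
    · rintro ⟨a, ha, haT⟩
      exact ⟨a, (hQOf _).trans ha, haT⟩
    · rintro ⟨a, ha, haT⟩
      exact ⟨a, (hQOf _).symm.trans ha, haT⟩
  let G : (glue P Q m).carrier → (glue Ps W m').carrier := fun u =>
    Sum.rec (fun x => Sum.inl x) (fun y => Sum.inr ⟨Sum.inr y, inr_not_mem_glue_S mt⟩) u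
  have hkey : ∀ u, glueQOf Ps W m' (G u) = some u := by
    rintro (x | y)
    · show glueQOf Ps W m' (Sum.inl x) = some (Sum.inl x)
      rw [glueQOf_inl_pos m' (hPsT x)]
      rfl
    · rfl
  have hGbij : Function.Bijective G := by
    constructor
    · rintro (x | y) (x' | y') hxy
      · exact congrArg Sum.inl (Sum.inl.inj hxy)
      · cases hxy
      · cases hxy
      · have h1 := congrArg Subtype.val (Sum.inr.inj hxy)
        exact congrArg Sum.inr (Sum.inr.inj h1)
    · rintro (x | ⟨x | y, hw⟩)
      · exact ⟨Sum.inl x, rfl⟩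
      · exact absurd ((inl_mem_glue_S mt).mpr (Set.mem_univ x)) hw
      · exact ⟨Sum.inr y, rfl⟩
  have j : Iso (glue P Q m) (glue Ps W m') := by
    refine ⟨Equiv.ofBijective G hGbij, ?_, ?_, ?_, ?_, ?_⟩
    · intro u v
      constructor
      · intro hlt
        exact Or.inr (Or.inl ⟨u, v, hkey u, hkey v, (hltW u v).mp hlt⟩)
      · rintro (⟨a, b, ha, hb, hab⟩ | ⟨a, b, ha, hb, hab⟩ | ⟨⟨a, ha, haT⟩, -⟩)
        · exact absurd hab (hd a b)
        · replace ha : glueQOf Ps W m' (G u) = some a := ha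
          replace hb : glueQOf Ps W m' (G v) = some b := hb
          rw [hkey u] at ha
          rw [hkey v] at hb
          obtain rfl := Option.some.inj ha
          obtain rfl := Option.some.inj hb
          exact (hltW u v).mpr hab
        · exact absurd (hPsT a) haT
    · intro u v
      constructor
      · intro hev
        exact Or.inr ⟨u, v, hkey u, hkey v, (hevW u v).mp hev⟩
      · rintro (⟨a, b, ha, hb, hab⟩ | ⟨a, b, ha, hb, hab⟩)
        · replace ha : gluePOf Ps W (G u) = some a := ha
          replace hb : gluePOf Ps W (G v) = some b := hb
          have hu := gluePOf_eq_some ha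
          have hv := gluePOf_eq_some hb
          cases u with
          | inl x =>
            cases v with
            | inl x' =>
              have h1 : x = a := Sum.inl.inj hu
              have h2 : x' = b := Sum.inl.inj hv
              subst h1
              subst h2
              exact Or.inl ⟨x, x', rfl, rfl, hab⟩
            | inr y' => cases hv
          | inr y => cases hu
        · replace ha : glueQOf Ps W m' (G u) = some a := ha
          replace hb : glueQOf Ps W m' (G v) = some b := hb
          rw [hkey u] at ha
          rw [hkey v] at hb
          obtain rfl := Option.some.inj ha
          obtain rfl := Option.some.inj hb
          exact (hevW u v).mpr hab
    · intro u
      cases u with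
      | inl x =>
        constructor
        · intro hmem
          exact (inl_mem_glue_S m').mpr ((inl_mem_glue_S m).mp hmem)
        · intro hmem
          exact (inl_mem_glue_S m).mpr ((inl_mem_glue_S m').mp hmem)
      | inr y => exact iff_of_false (inr_not_mem_glue_S m) (inr_not_mem_glue_S m')
    · intro u
      constructor
      · intro hmem
        exact ⟨u, hkey u, (hTW u).mp hmem⟩
      · rintro ⟨a, ha, haT⟩
        replace ha : glueQOf Ps W m' (G u) = some a := ha
        rw [hkey u] at ha
        obtain rfl := Option.some.inj ha
        exact (hTW u).mpr haT
    · rintro (x | y) <;> rfl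
  exact ⟨W, ⟨mt, iso_refl W⟩, ⟨m', iso_trans (iso_symm j) hiso⟩⟩

/-! #### Merging terminator and starter parts of a gluing -/

lemma glue_merge {P Q R₁ R : PreIpomset σ} (hP : P.IsIpomset) (hd : P.Discrete)
    (h1 : GlueRel ({P with S := Set.univ} : PreIpomset σ) Q R₁)
    (h2 : GlueRel ({P with T := Set.univ} : PreIpomset σ) R₁ R) :
    GlueRel P Q R := by
  obtain ⟨m₁, i₁⟩ := h1
  obtain ⟨m₂, i₂⟩ := h2
  obtain ⟨f, hf1, hf2, hf3, hf4, hf5⟩ := i₁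
  let Pt : PreIpomset σ := {P with S := Set.univ}
  let Ps : PreIpomset σ := {P with T := Set.univ}
  let W := glue Pt Q m₁
  let m : Matching P Q := ⟨m₁.g, m₁.evord_iff, m₁.lab_eq⟩
  have hmemT : ∀ x : P.carrier, x ∈ Ps.T := fun x => Set.mem_univ x
  have hPOf : ∀ u, gluePOf Pt Q u = gluePOf P Q u := by rintro (x | y) <;> rfl
  have hQOf : ∀ u, glueQOf Pt Q m₁ u = glueQOf P Q m u := by rintro (x | y) <;> rfl
  have hltW : ∀ u v, (glue P Q m).lt u v ↔ W.lt u v := by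
    intro u v
    constructor
    · rintro (⟨a, b, ha, hb, hab⟩ | ⟨a, b, ha, hb, hab⟩ | ⟨⟨a, ha, haT⟩, ⟨b, hb, hbS⟩⟩)
      · exact Or.inl ⟨a, b, (hPOf _).trans ha, (hPOf _).trans hb, hab⟩
      · exact Or.inr (Or.inl ⟨a, b, (hQOf _).trans ha, (hQOf _).trans hb, hab⟩)
      · exact Or.inr (Or.inr ⟨⟨a, (hPOf _).trans ha, haT⟩, ⟨b, (hQOf _).trans hb, hbS⟩⟩)
    · rintro (⟨a, b, ha, hb, hab⟩ | ⟨a, b, ha, hb, hab⟩ | ⟨⟨a, ha, haT⟩, ⟨b, hb, hbS⟩⟩)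
      · exact Or.inl ⟨a, b, (hPOf _).symm.trans ha, (hPOf _).symm.trans hb, hab⟩
      · exact Or.inr (Or.inl ⟨a, b, (hQOf _).symm.trans ha, (hQOf _).symm.trans hb, hab⟩)
      · exact Or.inr (Or.inr ⟨⟨a, (hPOf _).symm.trans ha, haT⟩, ⟨b, (hQOf _).symm.trans hb, hbS⟩⟩)
  have hevW : ∀ u v, (glue P Q m).evord u v ↔ W.evord u v := by
    intro u v
    constructor
    · rintro (⟨a, b, ha, hb, hab⟩ | ⟨a, b, ha, hb, hab⟩)
      · exact Or.inl ⟨a, b, (hPOf _).trans ha, (hPOf _).trans hb, hab⟩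
      · exact Or.inr ⟨a, b, (hQOf _).trans ha, (hQOf _).trans hb, hab⟩
    · rintro (⟨a, b, ha, hb, hab⟩ | ⟨a, b, ha, hb, hab⟩)
      · exact Or.inl ⟨a, b, (hPOf _).symm.trans ha, (hPOf _).symm.trans hb, hab⟩
      · exact Or.inr ⟨a, b, (hQOf _).symm.trans ha, (hQOf _).symm.trans hb, hab⟩
  have hTW : ∀ u, u ∈ (glue P Q m).T ↔ u ∈ W.T := by
    intro u
    constructor
    · rintro ⟨a, ha, haT⟩
      exact ⟨a, (hQOf _).trans ha, haT⟩
    · rintro ⟨a, ha, haT⟩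
      exact ⟨a, (hQOf _).symm.trans ha, haT⟩
  have hval : ∀ x : P.carrier, ∃ a : P.carrier,
      f.symm (m₂.g ⟨x, hmemT x⟩).val = Sum.inl a := by
    intro x
    have hv : (m₂.g ⟨x, hmemT x⟩).val ∈ R₁.S := (m₂.g ⟨x, hmemT x⟩).property
    have hw : f.symm ((m₂.g ⟨x, hmemT x⟩).val) ∈ W.S := by
      refine (hf3 _).mpr ?_
      rw [Equiv.apply_symm_apply]
      exact hv
    obtain ⟨a, ha, -⟩ := hw
    exact ⟨a, gluePOf_eq_some ha⟩
  let g₀ : P.carrier → P.carrier := fun x => (hval x).choose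
  have hg₀ : ∀ x, f.symm (m₂.g ⟨x, hmemT x⟩).val = Sum.inl (g₀ x) :=
    fun x => (hval x).choose_spec
  have hg₀' : ∀ x, f (Sum.inl (g₀ x)) = (m₂.g ⟨x, hmemT x⟩).val := by
    intro x
    rw [← hg₀ x, Equiv.apply_symm_apply]
  have hg₀inj : Function.Injective g₀ := by
    intro x y hxy
    have h1' : (m₂.g ⟨x, hmemT x⟩).val = (m₂.g ⟨y, hmemT y⟩).val := by
      rw [← hg₀' x, ← hg₀' y, hxy]
    have h2' := m₂.g.injective (Subtype.ext h1')
    exact congrArg Subtype.val h2'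
  have hg₀surj : Function.Surjective g₀ := by
    intro a
    have haS : Sum.inl a ∈ W.S := ⟨a, rfl, Set.mem_univ a⟩
    have hfa : f (Sum.inl a) ∈ R₁.S := (hf3 _).mp haS
    refine ⟨(m₂.g.symm ⟨f (Sum.inl a), hfa⟩).val, ?_⟩
    have h3' : (m₂.g ⟨(m₂.g.symm ⟨f (Sum.inl a), hfa⟩).val, hmemT _⟩).val = f (Sum.inl a) := by
      rw [Subtype.coe_eta, Equiv.apply_symm_apply]
    have h4 := hg₀ ((m₂.g.symm ⟨f (Sum.inl a), hfa⟩).val)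
    rw [h3'] at h4
    erw [Equiv.symm_apply_apply] at h4
    exact (Sum.inl.inj h4).symm
  have hg₀ev : ∀ x y, P.evord x y ↔ P.evord (g₀ x) (g₀ y) := by
    intro x y
    have e1 := m₂.evord_iff ⟨x, hmemT x⟩ ⟨y, hmemT y⟩
    have e2 := hf2 (Sum.inl (g₀ x)) (Sum.inl (g₀ y))
    rw [hg₀' x, hg₀' y] at e2
    rw [glue_evord_inl_inl m₁] at e2
    exact e1.trans e2.symm
  have hfix : ∀ x, g₀ x = x :=
    evord_rigid hP hd (Equiv.ofBijective g₀ ⟨hg₀inj, hg₀surj⟩) hg₀ev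
  have hkey0 : ∀ x : P.carrier, f (Sum.inl x) = (m₂.g ⟨x, hmemT x⟩).val := by
    intro x
    have h5 := hg₀' x
    rwa [hfix x] at h5
  have hnotS : ∀ y : {y : Q.carrier // y ∉ Q.S}, f (Sum.inr y) ∉ R₁.S := by
    intro y hc
    exact inr_not_mem_glue_S m₁ ((hf3 (Sum.inr y)).mpr hc)
  let F : (glue P Q m).carrier → (glue Ps R₁ m₂).carrier := fun u =>
    Sum.rec (fun x => Sum.inl x) (fun y => Sum.inr ⟨f (Sum.inr y), hnotS y⟩) u
  have hkey : ∀ u, glueQOf Ps R₁ m₂ (F u) = some (f u) := by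
    rintro (x | y)
    · show glueQOf Ps R₁ m₂ (Sum.inl x) = some (f (Sum.inl x))
      rw [glueQOf_inl_pos m₂ (hmemT x), hkey0 x]
    · rfl
  have hFbij : Function.Bijective F := by
    constructor
    · rintro (x | y) (x' | y') hxy
      · exact congrArg Sum.inl (Sum.inl.inj hxy)
      · cases hxy
      · cases hxy
      · have h' := congrArg Subtype.val (Sum.inr.inj hxy)
        exact congrArg Sum.inr (Sum.inr.inj (f.injective h'))
    · rintro (x | ⟨v, hv⟩)
      · exact ⟨Sum.inl x, rfl⟩
      · rcases hy : f.symm v with x | y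
        · exfalso
          have hxS : Sum.inl x ∈ W.S := ⟨x, rfl, Set.mem_univ x⟩
          have hfi := (hf3 _).mp hxS
          rw [← hy, Equiv.apply_symm_apply] at hfi
          exact hv hfi
        · refine ⟨Sum.inr y, ?_⟩
          show Sum.inr (⟨f (Sum.inr y), _⟩ : {u // u ∉ R₁.S}) = Sum.inr ⟨v, hv⟩
          congr 1
          refine Subtype.ext ?_
          show f (Sum.inr y) = v
          rw [← hy, Equiv.apply_symm_apply]
  refine ⟨m, iso_trans ⟨Equiv.ofBijective F hFbij, ?_, ?_, ?_, ?_, ?_⟩ i₂⟩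
  · intro u v
    constructor
    · intro hlt
      exact Or.inr (Or.inl ⟨f u, f v, hkey u, hkey v, (hf1 u v).mp ((hltW u v).mp hlt)⟩)
    · rintro (⟨a, b, ha, hb, hab⟩ | ⟨a, b, ha, hb, hab⟩ | ⟨⟨a, ha, haT⟩, -⟩)
      · exact absurd hab (hd a b)
      · replace ha : glueQOf Ps R₁ m₂ (F u) = some a := ha
        replace hb : glueQOf Ps R₁ m₂ (F v) = some b := hb
        rw [hkey u] at ha
        rw [hkey v] at hb
        obtain rfl := Option.some.inj ha
        obtain rfl := Option.some.inj hb
        exact (hltW u v).mpr ((hf1 u v).mpr hab)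
      · exact absurd (hmemT a) haT
  · intro u v
    constructor
    · intro hev
      exact Or.inr ⟨f u, f v, hkey u, hkey v, (hf2 u v).mp ((hevW u v).mp hev)⟩
    · rintro (⟨a, b, ha, hb, hab⟩ | ⟨a, b, ha, hb, hab⟩)
      · replace ha : gluePOf Ps R₁ (F u) = some a := ha
        replace hb : gluePOf Ps R₁ (F v) = some b := hb
        have hu := gluePOf_eq_some ha
        have hv := gluePOf_eq_some hb
        cases u with
        | inl x =>
          cases v with
          | inl x' =>
            have e1 : x = a := Sum.inl.inj hu
            have e2 : x' = b := Sum.inl.inj hv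
            subst e1
            subst e2
            exact Or.inl ⟨x, x', rfl, rfl, hab⟩
          | inr y' => cases hv
        | inr y => cases hu
      · replace ha : glueQOf Ps R₁ m₂ (F u) = some a := ha
        replace hb : glueQOf Ps R₁ m₂ (F v) = some b := hb
        rw [hkey u] at ha
        rw [hkey v] at hb
        obtain rfl := Option.some.inj ha
        obtain rfl := Option.some.inj hb
        exact (hevW u v).mpr ((hf2 u v).mpr hab)
  · intro u
    cases u with
    | inl x =>
      constructor
      · intro hm
        exact (inl_mem_glue_S m₂).mpr ((inl_mem_glue_S m).mp hm)
      · intro hm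
        exact (inl_mem_glue_S m).mpr ((inl_mem_glue_S m₂).mp hm)
    | inr y => exact iff_of_false (inr_not_mem_glue_S m) (inr_not_mem_glue_S m₂)
  · intro u
    constructor
    · intro hm
      exact ⟨f u, hkey u, (hf4 u).mp ((hTW u).mp hm)⟩
    · rintro ⟨a, ha, haT⟩
      replace ha : glueQOf Ps R₁ m₂ (F u) = some a := ha
      rw [hkey u] at ha
      obtain rfl := Option.some.inj ha
      exact (hTW u).mpr ((hf4 u).mpr haT)
  · rintro (x | y)
    · rfl
    · exact hf5 (Sum.inr y)

end PreIpomset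
open PreIpomset in
lemma recA_iso {σ : Type} {A : PAutomaton σ} {p r : A.Q} {β : PAutomaton.Path A p r}
    {R R2 : PreIpomset σ} (h : PAutomaton.Rec β R) (hi : Iso R R2) :
    PAutomaton.Rec β R2 := by
  cases h with
  | nil =>
    rename_i h0
    exact PAutomaton.Rec.nil _ _ (iso_trans h0 hi)
  | cons e rest hrec hglue => exact PAutomaton.Rec.cons e rest hrec (hglue.trans_iso hi)

section XLemmas

open PreIpomset

variable {σ : Type} {A : PAutomaton σ}

lemma cos_inl {q : A.Q} {e : A.E} (h : cellOfState A q = Sum.inl e) :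
    (IsTerminator (A.lab e) ∧ A.src e = q) ∨ (IsStarter (A.lab e) ∧ A.tgt e = q) := by
  unfold cellOfState at h
  split_ifs at h with h1 h2
  · exact Or.inl ((Sum.inl.inj h) ▸ h1.choose_spec)
  · exact Or.inr ((Sum.inl.inj h) ▸ h2.choose_spec)

lemma cos_inr {q q' : A.Q} (h : cellOfState A q = Sum.inr q') : q' = q := by
  unfold cellOfState at h
  split_ifs at h with h1 h2
  exact (Sum.inr.inj h).symm

lemma not_starter_and_terminator (hr : A.Reduced) (e : A.E) (h1 : IsStarter (A.lab e))
    (h2 : IsTerminator (A.lab e)) : False :=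
  hr.1 e ⟨h1.1, h1.2.1, h2.2.2, h1.2.2⟩

lemma cos_inj (hr : A.Reduced) {q q' : A.Q} (h : cellOfState A q = cellOfState A q') :
    q = q' := by
  cases hcq : cellOfState A q with
  | inl e =>
    rw [hcq] at h
    rcases cos_inl hcq with ⟨ht, hs⟩ | ⟨hst, htg⟩
    · rcases cos_inl h.symm with ⟨ht', hs'⟩ | ⟨hst', htg'⟩
      · rw [← hs, ← hs']
      · exact absurd hst' (fun hc => not_starter_and_terminator hr e hc ht)
    · rcases cos_inl h.symm with ⟨ht', hs'⟩ | ⟨hst', htg'⟩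
      · exact absurd hst (fun hc => not_starter_and_terminator hr e hc ht')
      · rw [← htg, ← htg']
  | inr q₀ =>
    rw [hcq] at h
    rw [← cos_inr hcq, ← cos_inr h.symm]

lemma cos_src_term (hr : A.Reduced) {e : A.E} (ht : IsTerminator (A.lab e)) :
    cellOfState A (A.src e) = Sum.inl e := by
  unfold cellOfState
  have hex : ∃ e', IsTerminator (A.lab e') ∧ A.src e' = A.src e := ⟨e, ht, rfl⟩
  rw [dif_pos hex]
  have hstart : A.src e ∈ A.start := hr.2.2.2.2.1 e ht.2.2
  exact congrArg Sum.inl (hr.2.2.2.2.2.1 e hex.choose hstart hex.choose_spec.2)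

lemma cos_tgt_starter (hr : A.Reduced) {e : A.E} (hs : IsStarter (A.lab e)) :
    cellOfState A (A.tgt e) = Sum.inl e := by
  unfold cellOfState
  have hacc : A.tgt e ∈ A.accept := hr.2.2.2.1 e hs.2.2
  have hne : ¬ ∃ e', IsTerminator (A.lab e') ∧ A.src e' = A.tgt e := by
    rintro ⟨e', -, hsrc⟩
    exact hr.2.2.1 e' (hsrc ▸ hacc)
  rw [dif_neg hne]
  have hex : ∃ e', IsStarter (A.lab e') ∧ A.tgt e' = A.tgt e := ⟨e, hs, rfl⟩
  rw [dif_pos hex]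
  exact congrArg Sum.inl (hr.2.2.2.2.2.2 e hex.choose hacc hex.choose_spec.2)

lemma ev_discrete (hA : A.IsPA) (hg : A.IsGST) (x : A.E ⊕ A.Q) :
    ((XofA A).ev x).Discrete := by
  cases x with
  | inl e => exact hg e
  | inr q => exact (hA.2.2.1 q).2.1

lemma mu_discrete (hA : A.IsPA) (q : A.Q) : (A.mu q).Discrete := (hA.2.2.1 q).2.1

lemma cequiv_ev_cos (hA : A.IsPA) (q : A.Q) :
    Nonempty (CEquiv ((XofA A).ev (cellOfState A q)) (A.mu q)) := by
  cases hc : cellOfState A q with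
  | inl e =>
    rcases cos_inl hc with ⟨ht, hsrc⟩ | ⟨hs, htgt⟩
    · subst hsrc
      refine ⟨((cEquivConclistOf _).trans ((cEquivRestrictUniv _).symm)).trans ?_⟩
      have hEq : (A.lab e).restrict Set.univ = (A.lab e).srcIface := by
        unfold srcIface
        rw [ht.2.2]
      rw [hEq]
      exact CEquiv.ofIso (hA.2.2.2.2.1 e)
    · subst htgt
      refine ⟨((cEquivConclistOf _).trans ((cEquivRestrictUniv _).symm)).trans ?_⟩
      have hEq : (A.lab e).restrict Set.univ = (A.lab e).tgtIface := by
        unfold tgtIface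
        rw [hs.2.2]
      rw [hEq]
      exact CEquiv.ofIso (hA.2.2.2.2.2 e)
  | inr q' =>
    obtain rfl := cos_inr hc
    exact ⟨CEquiv.refl (A.mu q')⟩

lemma face_inl {e : A.E} {As Bs : Set (((XofA A).ev (Sum.inl e)).carrier)}
    {x : A.E ⊕ A.Q} (h : (XofA A).face (Sum.inl e) As Bs = some x) :
    (As = ∅ ∧ Bs = ∅ ∧ x = Sum.inl e) ∨
    (¬(As = ∅ ∧ Bs = ∅) ∧ As = (A.lab e).Sᶜ ∧ Bs = ∅ ∧ x = cellOfState A (A.src e)) ∨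
    (¬(As = ∅ ∧ Bs = ∅) ∧ As = ∅ ∧ Bs = (A.lab e).Tᶜ ∧ x = cellOfState A (A.tgt e)) := by
  dsimp only [XofA] at h
  split_ifs at h with h1 h2 h3
  · exact Or.inl ⟨h1.1, h1.2, (Option.some.inj h).symm⟩
  · exact Or.inr (Or.inl ⟨h1, h2.1, h2.2, (Option.some.inj h).symm⟩)
  · exact Or.inr (Or.inr ⟨h1, h3.1, h3.2, (Option.some.inj h).symm⟩)

lemma face_inr {q : A.Q} {As Bs : Set (((XofA A).ev (Sum.inr q)).carrier)}
    {x : A.E ⊕ A.Q} (h : (XofA A).face (Sum.inr q) As Bs = some x) :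
    As = ∅ ∧ Bs = ∅ ∧ x = Sum.inr q := by
  dsimp only [XofA] at h
  split_ifs at h with h1
  exact ⟨h1.1, h1.2, (Option.some.inj h).symm⟩

lemma face_up_eq (e : A.E) (hS : (A.lab e).S ≠ Set.univ) :
    (XofA A).face (Sum.inl e) ((A.lab e).Sᶜ) ∅ = some (cellOfState A (A.src e)) := by
  dsimp only [XofA]
  rw [if_neg, if_pos ⟨rfl, rfl⟩]
  rintro ⟨h1, -⟩
  exact hS (Set.compl_empty_iff.mp h1)

lemma face_down_eq (e : A.E) (hT : (A.lab e).T ≠ Set.univ) :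
    (XofA A).face (Sum.inl e) ∅ ((A.lab e).Tᶜ) = some (cellOfState A (A.tgt e)) := by
  dsimp only [XofA]
  rw [if_neg, if_neg, if_pos ⟨rfl, rfl⟩]
  · rintro ⟨-, h2⟩
    exact hT (Set.compl_empty_iff.mp h2)
  · rintro ⟨-, h2⟩
    exact hT (Set.compl_empty_iff.mp h2)

end XLemmas
section MainLemmas

open PreIpomset

variable {σ : Type} {A : PAutomaton σ}

lemma iso_ev_cos_idOf (hA : A.IsPA) (hg : A.IsGST) (q : A.Q) :
    Iso (((XofA A).ev (cellOfState A q)).idOf) ((A.mu q).idOf) := by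
  obtain ⟨c⟩ := cequiv_ev_cos hA q
  exact iso_idOf_of_cequiv c (ev_discrete hA hg _) (mu_discrete hA q)

lemma face_cequiv (hA : A.IsPA) {y x : A.E ⊕ A.Q} {As : Set (((XofA A).ev y).carrier)}
    (h : (XofA A).face y As ∅ = some x) :
    Nonempty (CEquiv ((XofA A).ev x) (((XofA A).ev y).restrict Asᶜ)) := by
  cases y with
  | inr q =>
    obtain ⟨hA0, -, rfl⟩ := face_inr h
    subst hA0
    rw [Set.compl_empty]
    exact ⟨(cEquivRestrictUniv _).symm⟩
  | inl e =>
    rcases face_inl h with ⟨hA0, -, rfl⟩ | ⟨hne, hA0, -, rfl⟩ | ⟨hne, hA0, hB, -⟩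
    · subst hA0
      rw [Set.compl_empty]
      exact ⟨(cEquivRestrictUniv _).symm⟩
    · subst hA0
      erw [compl_compl]
      obtain ⟨c⟩ := cequiv_ev_cos hA (A.src e)
      exact ⟨c.trans (CEquiv.ofIso (iso_symm (hA.2.2.2.2.1 e)))⟩
    · exact absurd ⟨hA0, rfl⟩ hne

lemma recX_matching (hA : A.IsPA) (hg : A.IsGST) {x z : (XofA A).cell}
    {α : PrePHDA.Path (XofA A) x z} {R : PreIpomset σ} (h : PrePHDA.Rec α R) :
    Nonempty (Matching (((XofA A).ev x).idOf) R) := by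
  cases h with
  | nil =>
    rename_i hiso
    exact ⟨matchingOfIdOfIso hiso⟩
  | up y A₀ hface rest hrec hglue =>
    obtain ⟨m, hiso⟩ := hglue
    obtain ⟨c1⟩ := face_cequiv hA hface
    exact ⟨Matching.ofCEquiv ((cEquivRestrictUniv _).trans ((cEquivIdOf _).trans
      (c1.trans (((cEquivGlueS m).symm).trans (cEquivSrcIface hiso)))))⟩
  | down y B hface rest hrec hglue =>
    obtain ⟨m, hiso⟩ := hglue
    exact ⟨Matching.ofCEquiv (((cEquivGlueS m).symm).trans (cEquivSrcIface hiso))⟩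

lemma pathA_to_X (hA : A.IsPA) (hg : A.IsGST) (hr : A.Reduced) {p r : A.Q}
    (β : PAutomaton.Path A p r) (R : PreIpomset σ) (h : PAutomaton.Rec β R) :
    ∃ α : PrePHDA.Path (XofA A) (cellOfState A p) (cellOfState A r), PrePHDA.Rec α R := by
  induction h with
  | nil =>
    rename_i hiso
    exact ⟨PrePHDA.Path.nil _, PrePHDA.Rec.nil _ _ (iso_trans (iso_ev_cos_idOf hA hg _) hiso)⟩
  | cons e rest hrec hglue ih =>
    have hips := hA.2.2.2.1 e
    have hdisc := hg e
    have hEqT : ((XofA A).ev (Sum.inl e)).terminator ((A.lab e).Tᶜ) =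
        ({A.lab e with S := Set.univ} : PreIpomset σ) := terminator_eq (A.lab e)
    have hEqS : ((XofA A).ev (Sum.inl e)).starter ((A.lab e).Sᶜ) =
        ({A.lab e with T := Set.univ} : PreIpomset σ) := starter_eq (A.lab e)
    by_cases hS : (A.lab e).S = Set.univ
    · -- the label is a terminator
      have hterm : IsTerminator (A.lab e) := ⟨hips, hdisc, hS⟩
      have hT : (A.lab e).T ≠ Set.univ := fun hT => hr.1 e ⟨hips, hdisc, hS, hT⟩
      have hface := face_down_eq (A := A) e hT
      obtain ⟨α', hα'⟩ := ih
      rw [cos_src_term hr hterm]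
      refine ⟨PrePHDA.Path.down (Sum.inl e) ((A.lab e).Tᶜ) hface α',
        PrePHDA.Rec.down _ _ hface α' hα' ?_⟩
      rw [hEqT, updS_eq hS]
      exact hglue
    · by_cases hT : (A.lab e).T = Set.univ
      · -- the label is a starter
        have hstar : IsStarter (A.lab e) := ⟨hips, hdisc, hT⟩
        rw [cos_tgt_starter hr hstar] at ih
        obtain ⟨α', hα'⟩ := ih
        have hface := face_up_eq (A := A) e hS
        refine ⟨PrePHDA.Path.up (Sum.inl e) ((A.lab e).Sᶜ) hface α',
          PrePHDA.Rec.up _ _ hface α' hα' ?_⟩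
        rw [hEqS, updT_eq hT]
        exact hglue
      · -- generic case: split into starter and terminator
        obtain ⟨α', hα'⟩ := ih
        obtain ⟨R₁, hg1, hg2⟩ := glue_split (hg e) hglue
        refine ⟨PrePHDA.Path.up (Sum.inl e) ((A.lab e).Sᶜ) (face_up_eq e hS)
          (PrePHDA.Path.down (Sum.inl e) ((A.lab e).Tᶜ) (face_down_eq e hT) α'),
          PrePHDA.Rec.up _ _ _ _ (R' := R₁) (PrePHDA.Rec.down _ _ _ _ (R := R₁) hα' ?_) ?_⟩
        · rw [hEqT]
          exact hg1
        · rw [hEqS]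
          exact hg2

lemma pathX_to_A (hA : A.IsPA) (hg : A.IsGST) (hr : A.Reduced) {x z : (XofA A).cell}
    (α : PrePHDA.Path (XofA A) x z) (R : PreIpomset σ) (h : PrePHDA.Rec α R) :
    z ∈ cellOfState A '' A.accept →
      (∀ q, x = cellOfState A q →
        ∃ r, r ∈ A.accept ∧ ∃ β : PAutomaton.Path A q r, PAutomaton.Rec β R) ∧
      (∀ e, x = Sum.inl e → (A.lab e).S ≠ Set.univ →
        ∃ r, r ∈ A.accept ∧ ∃ β : PAutomaton.Path A (A.tgt e) r, ∃ R₃,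
          PAutomaton.Rec β R₃ ∧
          GlueRel ({A.lab e with S := Set.univ} : PreIpomset σ) R₃ R) := by
  induction h with
  | nil =>
    rename_i hiso
    intro hz
    obtain ⟨q', hq', hcq'⟩ := hz
    constructor
    · intro q hq
      obtain rfl : q' = q := cos_inj hr (hcq'.trans hq)
      refine ⟨q', hq', PAutomaton.Path.nil q', PAutomaton.Rec.nil _ _ ?_⟩
      rw [hq] at hiso
      exact iso_trans (iso_symm (iso_ev_cos_idOf hA hg q')) hiso
    · intro e he hSne
      rw [he] at hcq'
      rcases cos_inl hcq' with ⟨hterm, -⟩ | ⟨hstar, htgt⟩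
      · exact absurd hterm.2.2 hSne
      · subst htgt
        rw [he] at hiso
        have h1 : Iso ((A.mu (A.tgt e)).idOf) (((XofA A).ev (Sum.inl e)).idOf) := by
          have h2 := iso_ev_cos_idOf hA hg (A.tgt e)
          rw [hcq'] at h2
          exact iso_symm h2
        refine ⟨A.tgt e, hq', PAutomaton.Path.nil _, _,
          PAutomaton.Rec.nil _ _ (iso_trans h1 hiso), ?_⟩
        have hmm := matchingOfIdOfIso hiso
        have hEq : ({A.lab e with S := Set.univ} : PreIpomset σ) =
            (((XofA A).ev (Sum.inl e)).idOf) := updS_idOf hstar.2.2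
        rw [hEq]
        exact glueRel_self_of_identity (I := (((XofA A).ev (Sum.inl e)).idOf)) (hg e) rfl rfl hmm
  | up y A₀ hface rest hrec hglue ih =>
    intro hz
    have IH := ih hz
    cases y with
    | inr q₀ =>
      obtain ⟨hA0, -, hx⟩ := face_inr hface
      subst hA0
      subst hx
      have hIso := glueRel_identity_iso (I := ((XofA A).ev (Sum.inr q₀)).starter ∅)
        (ev_discrete hA hg (Sum.inr q₀)) Set.compl_empty rfl hglue
      constructor
      · intro q hq
        obtain ⟨r, hrA, β, hβ⟩ := IH.1 q hq
        exact ⟨r, hrA, β, recA_iso hβ hIso⟩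
      · intro e he hSne
        obtain ⟨r, hrA, β, R₃, hβ, hgl⟩ := IH.2 e he hSne
        exact ⟨r, hrA, β, R₃, hβ, hgl.trans_iso hIso⟩
    | inl e' =>
      rcases face_inl hface with ⟨hA0, -, hx⟩ | ⟨hne, hA0, -, hx⟩ | ⟨hne, hA0, hB, -⟩
      · -- silent step
        subst hA0
        subst hx
        have hIso := glueRel_identity_iso (I := ((XofA A).ev (Sum.inl e')).starter ∅)
          (ev_discrete hA hg (Sum.inl e')) Set.compl_empty rfl hglue
        constructor
        · intro q hq
          obtain ⟨r, hrA, β, hβ⟩ := IH.1 q hq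
          exact ⟨r, hrA, β, recA_iso hβ hIso⟩
        · intro e he hSne
          obtain ⟨r, hrA, β, R₃, hβ, hgl⟩ := IH.2 e he hSne
          exact ⟨r, hrA, β, R₃, hβ, hgl.trans_iso hIso⟩
      · -- genuine upstep into e'
        subst hA0
        subst hx
        have hS'ne : (A.lab e').S ≠ Set.univ := by
          intro hu
          exact hne ⟨by rw [hu]; exact Set.compl_univ, rfl⟩
        obtain ⟨r, hrA, β, R₃, hβ, hglT⟩ := IH.2 e' rfl hS'ne
        have hEqS : ((XofA A).ev (Sum.inl e')).starter ((A.lab e').Sᶜ) =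
            ({A.lab e' with T := Set.univ} : PreIpomset σ) := starter_eq (A.lab e')
        have hglue2 := hEqS ▸ hglue
        have hmerge := glue_merge (hA.2.2.2.1 e') (hg e') hglT hglue2
        have hβ2 := PAutomaton.Rec.cons e' β hβ hmerge
        constructor
        · intro q hq
          obtain rfl := cos_inj hr hq
          exact ⟨r, hrA, PAutomaton.Path.cons e' β, hβ2⟩
        · intro e'' he'' hS''
          rcases cos_inl he'' with ⟨hterm, -⟩ | ⟨hstar, htgt⟩
          · exact absurd hterm.2.2 hS''
          · have hRecFull := PrePHDA.Rec.up _ _ hface rest hrec hglue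
            obtain ⟨mm⟩ := recX_matching hA hg hRecFull
            rw [he''] at mm
            have hEq'' : ({A.lab e'' with S := Set.univ} : PreIpomset σ) =
                (((XofA A).ev (Sum.inl e'')).idOf) := updS_idOf hstar.2.2
            rw [htgt]
            refine ⟨r, hrA, PAutomaton.Path.cons e' β, _, hβ2, ?_⟩
            rw [hEq'']
            exact glueRel_self_of_identity (I := (((XofA A).ev (Sum.inl e'')).idOf))
              (hg e'') rfl rfl mm
      · exact absurd ⟨hA0, rfl⟩ hne
  | down y B hface rest hrec hglue ih =>
    intro hz
    have IH := ih hz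
    cases y with
    | inr q₀ =>
      obtain ⟨-, hB0, rfl⟩ := face_inr hface
      subst hB0
      have hIso := glueRel_identity_iso (I := ((XofA A).ev (Sum.inr q₀)).terminator ∅)
        (ev_discrete hA hg (Sum.inr q₀)) rfl Set.compl_empty hglue
      constructor
      · intro q hq
        obtain ⟨r, hrA, β, hβ⟩ := IH.1 q hq
        exact ⟨r, hrA, β, recA_iso hβ hIso⟩
      · intro e he hSne
        obtain ⟨r, hrA, β, R₃, hβ, hgl⟩ := IH.2 e he hSne
        exact ⟨r, hrA, β, R₃, hβ, hgl.trans_iso hIso⟩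
    | inl e' =>
      rcases face_inl hface with ⟨-, hB0, rfl⟩ | ⟨hne, h0, hB0, -⟩ | ⟨hne, -, hB0, rfl⟩
      · -- silent step
        subst hB0
        have hIso := glueRel_identity_iso (I := ((XofA A).ev (Sum.inl e')).terminator ∅)
          (ev_discrete hA hg (Sum.inl e')) rfl Set.compl_empty hglue
        constructor
        · intro q hq
          obtain ⟨r, hrA, β, hβ⟩ := IH.1 q hq
          exact ⟨r, hrA, β, recA_iso hβ hIso⟩
        · intro e he hSne
          obtain ⟨r, hrA, β, R₃, hβ, hgl⟩ := IH.2 e he hSne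
          exact ⟨r, hrA, β, R₃, hβ, hgl.trans_iso hIso⟩
      · exact absurd ⟨rfl, hB0⟩ hne
      · -- genuine downstep out of e'
        subst hB0
        have hT'ne : (A.lab e').T ≠ Set.univ := by
          intro hu
          exact hne ⟨rfl, by rw [hu]; exact Set.compl_univ⟩
        obtain ⟨r, hrA, β, hβ⟩ := IH.1 (A.tgt e') rfl
        have hEqT : ((XofA A).ev (Sum.inl e')).terminator ((A.lab e').Tᶜ) =
            ({A.lab e' with S := Set.univ} : PreIpomset σ) := terminator_eq (A.lab e')
        have hglue2 := hEqT ▸ hglue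
        constructor
        · intro q hq
          rcases cos_inl hq.symm with ⟨hterm, hsrc⟩ | ⟨hstar, -⟩
          · have hglue3 := (updS_eq hterm.2.2) ▸ hglue2
            subst hsrc
            exact ⟨r, hrA, PAutomaton.Path.cons e' β, PAutomaton.Rec.cons e' β hβ hglue3⟩
          · exact absurd hstar.2.2 hT'ne
        · intro e'' he'' hS''
          obtain rfl : e' = e'' := Sum.inl.inj he''
          exact ⟨r, hrA, β, _, hβ, hglue2⟩

end MainLemmas



/-- For a reduced gST-automaton `𝒜`, the partial HDA `X(𝒜)` recognizes
the same language: `L(X(𝒜)) = L(𝒜)`. -/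
theorem XofA_lang {σ : Type} [Finite σ] (A : PAutomaton σ)
    (hA : A.IsPA) (hg : A.IsGST) (hr : A.Reduced) :
    (XofA A).lang = A.lang := by
  ext R
  constructor
  · rintro ⟨x, z, α, hx, hzacc, hrec⟩
    obtain ⟨p, hp, rfl⟩ := hx
    obtain ⟨r, hrA, β, hβ⟩ := (pathX_to_A hA hg hr α R hrec hzacc).1 p rfl
    exact ⟨p, r, β, hp, hrA, hβ⟩
  · rintro ⟨p, r, β, hp, hrA, hβ⟩
    obtain ⟨α, hα⟩ := pathA_to_X hA hg hr β R hβ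
    exact ⟨_, _, α, ⟨p, hp, rfl⟩, ⟨r, hrA, rfl⟩, hα⟩

end HDA
end
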